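/- arXiv:1805.10806 — 10 statements merged into one kernel-verified Lean document; each statement's English description precedes it below -/
import Mathlib

section
/- Let S be an irreducible Cl(V)-module with an invariant pairing ⟨−,−⟩ : S ⊗ S → ℂ satisfying ⟨ρ(v)Q₁, ρ(v)Q₂⟩ = ⟨Q₁,Q₂⟩ for unit vectors v, and define Γ : S ⊗ S → V by (v, Γ(Q₁,Q₂)) = ⟨ρ(v)Q₁, Q₂⟩. Then for any spinor Q, the image S_Q of the map Γ(Q,−) : S → V equals the orthogonal complement T_Q^⊥ of the nullspace T_Q = {v ∈ V : ρ(v)Q = 0}. -/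
open Module CliffordAlgebra

/-- For an irreducible Clifford module `S` with invariant pairing `pr` and the
vector-valued pairing `Γ` defined by `B v (Γ s t) = pr (ι v • s) t`, the image
`S_Q` of `Γ Q (-)` equals the orthogonal complement of the nullspace
`T_Q = {v | ι v • Q = 0}`. -/
theorem stmt1
    {V : Type*} [AddCommGroup V] [Module ℂ V] [FiniteDimensional ℂ V]
    (Qf : QuadraticForm ℂ V) (B : V →ₗ[ℂ] V →ₗ[ℂ] ℂ)
    (hBsymm : ∀ v w : V, B v w = B w v)
    (hQB : ∀ v : V, Qf v = B v v)
    (hBnd : ∀ v : V, (∀ w : V, B v w = 0) → v = 0)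
    {S : Type*} [AddCommGroup S] [Module ℂ S] [FiniteDimensional ℂ S]
    [Module (CliffordAlgebra Qf) S] [IsScalarTower ℂ (CliffordAlgebra Qf) S]
    [IsSimpleModule (CliffordAlgebra Qf) S]
    (pr : S →ₗ[ℂ] S →ₗ[ℂ] ℂ)
    (hprnd : ∀ s : S, s ≠ 0 → ∃ t : S, pr s t ≠ 0)
    (hprinv : ∀ v : V, Qf v = 1 → ∀ s t : S, pr (ι Qf v • s) (ι Qf v • t) = pr s t)
    (Γ : S →ₗ[ℂ] S →ₗ[ℂ] V)
    (hΓ : ∀ (v : V) (s t : S), B v (Γ s t) = pr (ι Qf v • s) t)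
    (Q : S) :
    {v : V | ∃ s : S, Γ Q s = v} =
      {v : V | ∀ w : V, ι Qf w • Q = 0 → B w v = 0} := by
  classical
  -- the linear map `w ↦ ι w • Q`
  let f : V →ₗ[ℂ] S :=
    { toFun := fun w => ι Qf w • Q
      map_add' := by intro a b; simp [map_add, add_smul]
      map_smul' := by intro c a; simp [smul_assoc] }
  have hf : ∀ w, f w = ι Qf w • Q := fun _ => rfl
  have hrefl : (B : LinearMap.BilinForm ℂ V).IsRefl := by
    intro x y h; rw [hBsymm]; exact h
  have hnd : LinearMap.BilinForm.Nondegenerate B :=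
    ⟨fun v h => hBnd v h, fun v h => hBnd v (fun w => by rw [hBsymm]; exact h w)⟩
  set W : Submodule ℂ V := LinearMap.range (Γ Q) with hW
  -- orthogonal of W is ker f
  have hWorth : LinearMap.BilinForm.orthogonal B W = LinearMap.ker f := by
    ext m
    constructor
    · intro hm
      simp only [LinearMap.mem_ker]
      by_contra hne
      obtain ⟨t, ht⟩ := hprnd _ hne
      have : B (Γ Q t) m = 0 := hm _ ⟨t, rfl⟩
      rw [hBsymm, hΓ] at this
      exact ht this
    · intro hm n hn
      obtain ⟨t, rfl⟩ := hn
      have hm0 : ι Qf m • Q = 0 := hm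
      have := hΓ m Q t
      rw [hm0] at this
      simp only [LinearMap.map_zero, LinearMap.zero_apply] at this ⊢
      rw [hBsymm, this]
  -- RHS set is orthogonal of ker f
  have key : LinearMap.BilinForm.orthogonal B (LinearMap.ker f) = W := by
    rw [← hWorth]
    exact LinearMap.BilinForm.orthogonal_orthogonal hnd hrefl W
  ext v
  constructor
  · rintro ⟨s, rfl⟩ w hw
    rw [hΓ, hw]
    simp
  · intro hv
    have hmem : v ∈ LinearMap.BilinForm.orthogonal B (LinearMap.ker f) := by
      intro n hn
      show B n v = 0
      exact hv n hn
    rw [key] at hmem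
    exact hmem
end

section
/- With the setup of the spinor pairing Γ : S ⊗ S → V, if Q is a pure spinor (i.e. its nullspace T_Q is maximal isotropic) in even dimension n = 2m, then the image S_Q of Γ(Q,−) equals T_Q and has dimension m; if n = 2m+1 is odd, then S_Q = T_Q^⊥ has dimension m+1 and contains T_Q as a codimension-1 subspace. -/
open Module CliffordAlgebra

/-- For a pure spinor `Q` (nullspace `T_Q` maximal isotropic, of dimension `⌊n/2⌋`):
in even dimension `n = 2m` the image `S_Q` of `Γ(Q,-)` equals `T_Q` and has
dimension `m`; in odd dimension `n = 2m+1` it equals `T_Q^⊥`, has dimension `m+1`,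
and contains `T_Q` as a codimension-1 subspace. -/
theorem stmt2
    {V : Type*} [AddCommGroup V] [Module ℂ V] [FiniteDimensional ℂ V]
    (Qf : QuadraticForm ℂ V) (B : V →ₗ[ℂ] V →ₗ[ℂ] ℂ)
    (hBsymm : ∀ v w : V, B v w = B w v)
    (hQB : ∀ v : V, Qf v = B v v)
    (hBnd : ∀ v : V, (∀ w : V, B v w = 0) → v = 0)
    {S : Type*} [AddCommGroup S] [Module ℂ S] [FiniteDimensional ℂ S]
    [Module (CliffordAlgebra Qf) S] [IsScalarTower ℂ (CliffordAlgebra Qf) S]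
    [IsSimpleModule (CliffordAlgebra Qf) S]
    (pr : S →ₗ[ℂ] S →ₗ[ℂ] ℂ)
    (hprnd : ∀ s : S, s ≠ 0 → ∃ t : S, pr s t ≠ 0)
    (hprinv : ∀ v : V, Qf v = 1 → ∀ s t : S, pr (ι Qf v • s) (ι Qf v • t) = pr s t)
    (Γ : S →ₗ[ℂ] S →ₗ[ℂ] V)
    (hΓ : ∀ (v : V) (s t : S), B v (Γ s t) = pr (ι Qf v • s) t)
    (n : ℕ) (hn : finrank ℂ V = n)
    (Q : S) (hQ0 : Q ≠ 0)
    (T SQ Tperp : Submodule ℂ V)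
    (hT : ∀ v : V, v ∈ T ↔ ι Qf v • Q = 0)
    (hSQ : ∀ v : V, v ∈ SQ ↔ ∃ s : S, Γ Q s = v)
    (hTperp : ∀ v : V, v ∈ Tperp ↔ ∀ w ∈ T, B w v = 0)
    (hpure : finrank ℂ T = n / 2) :
    (∀ m : ℕ, n = 2 * m → SQ = T ∧ finrank ℂ SQ = m) ∧
    (∀ m : ℕ, n = 2 * m + 1 →
      SQ = Tperp ∧ finrank ℂ SQ = m + 1 ∧ T ≤ SQ ∧
        finrank ℂ SQ = finrank ℂ T + 1) := by
  classical
  have hrefl : LinearMap.BilinForm.IsRefl B := fun x y h => by rw [hBsymm]; exact h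
  have hnd : LinearMap.BilinForm.Nondegenerate B :=
    ⟨hBnd, fun v h => hBnd v (fun w => by rw [hBsymm]; exact h w)⟩
  -- Tperp is the B-orthogonal of T
  have hTperp_eq : Tperp = LinearMap.BilinForm.orthogonal B T := by
    ext v
    rw [hTperp, LinearMap.BilinForm.mem_orthogonal_iff]
  -- T is the B-orthogonal of SQ
  have horthSQ : LinearMap.BilinForm.orthogonal B SQ = T := by
    ext v
    rw [LinearMap.BilinForm.mem_orthogonal_iff, hT]
    constructor
    · intro h
      by_contra hne
      obtain ⟨t, ht⟩ := hprnd _ hne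
      have h1 : B v (Γ Q t) = pr (ι Qf v • Q) t := hΓ v Q t
      have h2 : B (Γ Q t) v = 0 := h _ ((hSQ _).2 ⟨t, rfl⟩)
      rw [hBsymm] at h2
      exact ht (h1 ▸ h2)
    · intro h u hu
      obtain ⟨s, hs⟩ := (hSQ u).1 hu
      have : B v u = 0 := by
        rw [← hs, hΓ, h]
        simp
      rw [hBsymm]
      exact this
  -- T is isotropic : T ≤ Tperp
  have hTiso : T ≤ Tperp := by
    intro v hv
    rw [hTperp]
    intro w hw
    have hv' := (hT v).1 hv
    have hw' := (hT w).1 hw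
    have hkey : (ι Qf w * ι Qf v + ι Qf v * ι Qf w) • Q = 0 := by
      rw [add_smul, mul_smul, mul_smul, hv', hw', smul_zero, smul_zero, add_zero]
    rw [ι_mul_ι_add_swap, algebraMap_smul] at hkey
    have hpolar : QuadraticMap.polar Qf w v = 2 * B w v := by
      simp only [QuadraticMap.polar, hQB, map_add, LinearMap.add_apply]
      rw [hBsymm v w]; ring
    rw [hpolar] at hkey
    rcases smul_eq_zero.1 hkey with h | h
    · rcases mul_eq_zero.1 h with h2 | h2
      · exact absurd h2 two_ne_zero
      · exact h2
    · exact absurd h hQ0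
  -- SQ = Tperp by double orthogonality
  have hSQT : SQ = Tperp := by
    rw [hTperp_eq, ← horthSQ,
      LinearMap.BilinForm.orthogonal_orthogonal hnd hrefl]
  -- dimension count
  have hdimT : finrank ℂ T = n / 2 := hpure
  have hdimSQ : finrank ℂ SQ = n - n / 2 := by
    rw [hSQT, hTperp_eq, LinearMap.BilinForm.finrank_orthogonal hnd, hn, hdimT]
  have hTSQ : T ≤ SQ := hSQT ▸ hTiso
  constructor
  · intro m hm
    have h1 : finrank ℂ SQ = m := by rw [hdimSQ, hm]; omega
    have h2 : finrank ℂ T = m := by rw [hdimT, hm]; omega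
    have : T = SQ := Submodule.eq_of_le_of_finrank_le hTSQ (by rw [h1, h2])
    exact ⟨this.symm, h1⟩
  · intro m hm
    have h1 : finrank ℂ SQ = m + 1 := by rw [hdimSQ, hm]; omega
    have h2 : finrank ℂ T = m := by rw [hdimT, hm]; omega
    exact ⟨hSQT, h1, hTSQ, by rw [h1, h2]⟩
end

section
/- Let V = ℂ³ be the vector representation of so(3,ℂ) and S = ℂ² the spin representation, with the equivariant isomorphism Sym²(S) ≅ V. Let W be a finite-dimensional complex vector space with a nondegenerate symmetric bilinear pairing. A supercharge Q ∈ S ⊗ W squares to zero under the induced bracket Sym²(S ⊗ W) → Sym²(S) ⊗ Sym²(W) → V (using the pairing on W) if and only if the image of the induced map Q : S* → W is a totally isotropic subspace of W. -/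
open Module

/-- Dimension 3: with `S = ℂ²`, `V = ℂ³`, `Sym²(S) ≅ V` via the symmetric pairing `Γ`,
and `W` carrying a nondegenerate symmetric pairing `BW`, a supercharge
`Q = ∑ sᵢ ⊗ wᵢ ∈ S ⊗ W` squares to zero iff the image of the induced map
`S* → W`, `f ↦ ∑ f(sᵢ) • wᵢ`, is totally isotropic in `W`. -/
theorem stmt3
    {S V W : Type*}
    [AddCommGroup S] [Module ℂ S] [FiniteDimensional ℂ S]
    [AddCommGroup V] [Module ℂ V] [FiniteDimensional ℂ V]
    [AddCommGroup W] [Module ℂ W] [FiniteDimensional ℂ W]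
    (hS : finrank ℂ S = 2) (hV : finrank ℂ V = 3)
    (Γ : S →ₗ[ℂ] S →ₗ[ℂ] V)
    (hΓsym : ∀ s t : S, Γ s t = Γ t s)
    (hΓsurj : Submodule.span ℂ {v : V | ∃ s t : S, Γ s t = v} = ⊤)
    (hΓinj : ∀ (m : ℕ) (a b : Fin m → S), (∑ i, Γ (a i) (b i)) = 0 →
      ∀ f g : Module.Dual ℂ S, (∑ i, (f (a i) * g (b i) + f (b i) * g (a i))) = 0)
    (BW : W →ₗ[ℂ] W →ₗ[ℂ] ℂ)
    (hBWsym : ∀ u v : W, BW u v = BW v u)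
    (hBWnd : ∀ u : W, (∀ v : W, BW u v = 0) → u = 0)
    (k : ℕ) (s : Fin k → S) (w : Fin k → W) :
    (∑ i, ∑ j, BW (w i) (w j) • Γ (s i) (s j)) = 0 ↔
      ∀ f g : Module.Dual ℂ S,
        BW (∑ i, f (s i) • w i) (∑ j, g (s j) • w j) = 0 := by
  have expand : ∀ f g : Module.Dual ℂ S,
      BW (∑ i, f (s i) • w i) (∑ j, g (s j) • w j)
        = ∑ i, ∑ j, f (s i) * g (s j) * BW (w i) (w j) := by
    intro f g
    simp only [map_sum, LinearMap.sum_apply, map_smul, LinearMap.smul_apply,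
      smul_eq_mul, Finset.mul_sum, mul_comm, mul_assoc, mul_left_comm]
    exact Finset.sum_comm
  constructor
  · intro h f g
    set e := (finProdFinEquiv (m := k) (n := k)).symm with he
    set a : Fin (k * k) → S := fun n => BW (w (e n).1) (w (e n).2) • s (e n).1 with ha
    set b : Fin (k * k) → S := fun n => s (e n).2 with hb
    have hsum : (∑ n, Γ (a n) (b n)) = 0 := by
      have h1 : (∑ n, Γ (a n) (b n))
          = ∑ p : Fin k × Fin k, Γ (BW (w p.1) (w p.2) • s p.1) (s p.2) :=
        Fintype.sum_equiv e _ _ (fun n => rfl)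
      rw [h1, Fintype.sum_prod_type]
      simpa [map_smul, LinearMap.smul_apply] using h
    have key := hΓinj (k * k) a b hsum f g
    have h2 : (∑ n, (f (a n) * g (b n) + f (b n) * g (a n)))
        = ∑ p : Fin k × Fin k,
            (f (BW (w p.1) (w p.2) • s p.1) * g (s p.2)
              + f (s p.2) * g (BW (w p.1) (w p.2) • s p.1)) :=
      Fintype.sum_equiv e _ _ (fun n => rfl)
    rw [h2, Fintype.sum_prod_type] at key
    simp only [map_smul, smul_eq_mul] at key
    have swap : (∑ i, ∑ j, BW (w i) (w j) * (f (s j) * g (s i)))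
        = ∑ i, ∑ j, BW (w i) (w j) * (f (s i) * g (s j)) := by
      rw [Finset.sum_comm]
      refine Finset.sum_congr rfl fun i _ => Finset.sum_congr rfl fun j _ => ?_
      rw [hBWsym]
    have key2 : (2 : ℂ) * (∑ i, ∑ j, BW (w i) (w j) * (f (s i) * g (s j))) = 0 := by
      have hkey : (∑ i, ∑ j, (BW (w i) (w j) * f (s i) * g (s j)
          + f (s j) * (BW (w i) (w j) * g (s i)))) = 0 := key
      calc (2 : ℂ) * (∑ i, ∑ j, BW (w i) (w j) * (f (s i) * g (s j)))
          = (∑ i, ∑ j, BW (w i) (w j) * (f (s i) * g (s j)))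
            + (∑ i, ∑ j, BW (w i) (w j) * (f (s j) * g (s i))) := by
            rw [swap]; ring
        _ = ∑ i, ∑ j, (BW (w i) (w j) * f (s i) * g (s j)
            + f (s j) * (BW (w i) (w j) * g (s i))) := by
            rw [← Finset.sum_add_distrib]
            refine Finset.sum_congr rfl fun i _ => ?_
            rw [← Finset.sum_add_distrib]
            refine Finset.sum_congr rfl fun j _ => ?_
            ring
        _ = 0 := hkey
    have h3 : (∑ i, ∑ j, BW (w i) (w j) * (f (s i) * g (s j))) = 0 :=
      (mul_eq_zero.mp key2).resolve_left two_ne_zero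
    rw [expand f g, ← h3]
    refine Finset.sum_congr rfl fun i _ => Finset.sum_congr rfl fun j _ => ?_
    ring
  · intro h
    set bb := Basis.ofVectorSpace ℂ S with hbb
    haveI : Fintype (Basis.ofVectorSpaceIndex ℂ S) := FiniteDimensional.fintypeBasisIndex bb
    have hrepr : ∀ i, s i = ∑ p, bb.coord p (s i) • bb p := fun i => (bb.sum_repr (s i)).symm
    have hΓ : ∀ i j, Γ (s i) (s j)
        = ∑ p, ∑ q, (bb.coord p (s i) * bb.coord q (s j)) • Γ (bb p) (bb q) := by
      intro i j
      conv_lhs => rw [hrepr i, hrepr j]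
      simp only [map_sum, LinearMap.sum_apply, map_smul, LinearMap.smul_apply,
        Finset.smul_sum, smul_smul]
      rw [Finset.sum_comm]
      refine Finset.sum_congr rfl fun p _ => Finset.sum_congr rfl fun q _ => ?_
      rw [mul_comm]
    calc (∑ i, ∑ j, BW (w i) (w j) • Γ (s i) (s j))
        = ∑ ij : Fin k × Fin k, ∑ pq : Basis.ofVectorSpaceIndex ℂ S × Basis.ofVectorSpaceIndex ℂ S,
            (BW (w ij.1) (w ij.2) * (bb.coord pq.1 (s ij.1) * bb.coord pq.2 (s ij.2)))
              • Γ (bb pq.1) (bb pq.2) := by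
          simp only [Fintype.sum_prod_type]
          refine Finset.sum_congr rfl fun i _ => Finset.sum_congr rfl fun j _ => ?_
          rw [hΓ i j, Finset.smul_sum]
          refine Finset.sum_congr rfl fun p _ => ?_
          rw [Finset.smul_sum]
          refine Finset.sum_congr rfl fun q _ => ?_
          rw [smul_smul]
      _ = ∑ pq : Basis.ofVectorSpaceIndex ℂ S × Basis.ofVectorSpaceIndex ℂ S,
            ∑ ij : Fin k × Fin k,
            (BW (w ij.1) (w ij.2) * (bb.coord pq.1 (s ij.1) * bb.coord pq.2 (s ij.2)))
              • Γ (bb pq.1) (bb pq.2) := Finset.sum_comm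
      _ = ∑ p, ∑ q, (∑ i, ∑ j,
            BW (w i) (w j) * (bb.coord p (s i) * bb.coord q (s j))) • Γ (bb p) (bb q) := by
          simp only [Fintype.sum_prod_type, Finset.sum_smul]
      _ = 0 := by
          refine Finset.sum_eq_zero fun p _ => Finset.sum_eq_zero fun q _ => ?_
          have hpq := h (bb.coord p) (bb.coord q)
          rw [expand] at hpq
          have hz : (∑ i, ∑ j,
              BW (w i) (w j) * (bb.coord p (s i) * bb.coord q (s j))) = 0 := by
            rw [← hpq]
            refine Finset.sum_congr rfl fun i _ => Finset.sum_congr rfl fun j _ => ?_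
            ring
          rw [hz, zero_smul]
end

section
/- Let S₊, S₋ be the two 2-dimensional semi-spin representations of so(4,ℂ), with the equivariant isomorphism Γ : S₊ ⊗ S₋ ≅ V = ℂ⁴. Let W be a finite-dimensional complex vector space. A supercharge Q = Q₊ + Q₋ ∈ S₊ ⊗ W ⊕ S₋ ⊗ W* squares to zero (with respect to the bracket induced by Γ and the evaluation pairing W ⊗ W* → ℂ) if and only if ⟨W_{Q₋}, W_{Q₊}⟩ = 0, where W_{Q₊} ⊆ W and W_{Q₋} ⊆ W* are the images of the induced maps S₊* → W and S₋* → W*, and ⟨−,−⟩ is the natural pairing between W* and W. -/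
open Module

private lemma sum_swap4 {ι₁ ι₂ ι₃ ι₄ β : Type*} [Fintype ι₁] [Fintype ι₂] [Fintype ι₃]
    [Fintype ι₄] [AddCommMonoid β] (F : ι₁ → ι₂ → ι₃ → ι₄ → β) :
    ∑ i, ∑ j, ∑ p, ∑ q, F i j p q = ∑ p, ∑ q, ∑ i, ∑ j, F i j p q := by
  calc ∑ i, ∑ j, ∑ p, ∑ q, F i j p q
      = ∑ i, ∑ p, ∑ j, ∑ q, F i j p q :=
        Finset.sum_congr rfl fun i _ => Finset.sum_comm
    _ = ∑ p, ∑ i, ∑ j, ∑ q, F i j p q := Finset.sum_comm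
    _ = ∑ p, ∑ i, ∑ q, ∑ j, F i j p q := Finset.sum_congr rfl fun p _ =>
        Finset.sum_congr rfl fun i _ => Finset.sum_comm
    _ = ∑ p, ∑ q, ∑ i, ∑ j, F i j p q := Finset.sum_congr rfl fun p _ => Finset.sum_comm

/-- Dimension 4: with `S₊, S₋` the 2-dimensional semi-spin representations and
`Γ : S₊ ⊗ S₋ ≅ V = ℂ⁴`, a supercharge `Q = Q₊ + Q₋ ∈ S₊ ⊗ W ⊕ S₋ ⊗ W*`
(represented by finite families) squares to zero iff `⟨W_{Q₋}, W_{Q₊}⟩ = 0`,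
where `W_{Q₊} ⊆ W` and `W_{Q₋} ⊆ W*` are the images of the induced maps
`S₊* → W` and `S₋* → W*`. -/
theorem stmt5
    {Sp Sm V W : Type*}
    [AddCommGroup Sp] [Module ℂ Sp] [FiniteDimensional ℂ Sp]
    [AddCommGroup Sm] [Module ℂ Sm] [FiniteDimensional ℂ Sm]
    [AddCommGroup V] [Module ℂ V] [FiniteDimensional ℂ V]
    [AddCommGroup W] [Module ℂ W] [FiniteDimensional ℂ W]
    (hSp : finrank ℂ Sp = 2) (hSm : finrank ℂ Sm = 2) (hV : finrank ℂ V = 4)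
    (Γ : Sp →ₗ[ℂ] Sm →ₗ[ℂ] V)
    (hΓsurj : Submodule.span ℂ {v : V | ∃ (s : Sp) (t : Sm), Γ s t = v} = ⊤)
    (hΓinj : ∀ (m : ℕ) (a : Fin m → Sp) (b : Fin m → Sm),
      (∑ i, Γ (a i) (b i)) = 0 →
      ∀ (g : Module.Dual ℂ Sp) (h : Module.Dual ℂ Sm),
        (∑ i, g (a i) * h (b i)) = 0)
    (k l : ℕ) (sp : Fin k → Sp) (w : Fin k → W)
    (sm : Fin l → Sm) (f : Fin l → Module.Dual ℂ W) :
    (∑ i, ∑ j, (f j) (w i) • Γ (sp i) (sm j)) = 0 ↔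
      ∀ (g : Module.Dual ℂ Sp) (h : Module.Dual ℂ Sm),
        (∑ j, h (sm j) • f j) (∑ i, g (sp i) • w i) = 0 := by
  have key : ∀ (g : Module.Dual ℂ Sp) (h : Module.Dual ℂ Sm),
      (∑ j, h (sm j) • f j) (∑ i, g (sp i) • w i)
        = ∑ i, ∑ j, f j (w i) * g (sp i) * h (sm j) := by
    intro g h
    simp only [LinearMap.sum_apply, LinearMap.smul_apply, map_sum, map_smul,
      smul_eq_mul, Finset.mul_sum]
    exact Finset.sum_congr rfl fun i _ => Finset.sum_congr rfl fun j _ => by ring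
  constructor
  · intro H g h
    rw [key]
    set e := finProdFinEquiv (m := k) (n := l) with he
    set a : Fin (k * l) → Sp := fun n => f (e.symm n).2 (w (e.symm n).1) • sp (e.symm n).1
      with ha
    set b : Fin (k * l) → Sm := fun n => sm (e.symm n).2 with hb
    have hsum : (∑ n, Γ (a n) (b n)) = 0 := by
      rw [← Equiv.sum_comp e (fun n => Γ (a n) (b n))]
      simp only [ha, hb, Equiv.symm_apply_apply]
      rw [Fintype.sum_prod_type]
      simpa [map_smul] using H
    have hz := hΓinj (k * l) a b hsum g h
    rw [← Equiv.sum_comp e (fun n => g (a n) * h (b n))] at hz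
    simp only [ha, hb, Equiv.symm_apply_apply, map_smul, smul_eq_mul] at hz
    rw [Fintype.sum_prod_type] at hz
    rw [← hz]
  · intro H
    have bp := Module.finBasis ℂ Sp
    have bm := Module.finBasis ℂ Sm
    have expand : ∀ (x : Sp) (y : Sm), Γ x y
        = ∑ p, ∑ q, (bp.repr x p * bm.repr y q) • Γ (bp p) (bm q) := by
      intro x y
      conv_lhs => rw [← bp.sum_repr x, ← bm.sum_repr y]
      simp only [map_sum, map_smul, LinearMap.sum_apply, LinearMap.smul_apply, smul_smul,
        Finset.smul_sum]
      conv_lhs => rw [Finset.sum_comm]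
      exact Finset.sum_congr rfl fun p _ => Finset.sum_congr rfl fun q _ => by rw [mul_comm]
    have hcoef : ∀ p q, (∑ i, ∑ j, f j (w i) * (bp.repr (sp i) p * bm.repr (sm j) q)) = 0 := by
      intro p q
      have hz := H (bp.coord p) (bm.coord q)
      rw [key] at hz
      rw [← hz]
      refine Finset.sum_congr rfl fun i _ => Finset.sum_congr rfl fun j _ => ?_
      simp only [Basis.coord_apply]; ring
    calc (∑ i, ∑ j, (f j) (w i) • Γ (sp i) (sm j))
        = ∑ i, ∑ j, ∑ p, ∑ q,
            (f j (w i) * (bp.repr (sp i) p * bm.repr (sm j) q)) • Γ (bp p) (bm q) := by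
          refine Finset.sum_congr rfl fun i _ => Finset.sum_congr rfl fun j _ => ?_
          rw [expand (sp i) (sm j)]
          simp [Finset.smul_sum, smul_smul]
      _ = ∑ p, ∑ q, ∑ i, ∑ j,
            (f j (w i) * (bp.repr (sp i) p * bm.repr (sm j) q)) • Γ (bp p) (bm q) :=
          sum_swap4 _
      _ = ∑ p, ∑ q, (∑ i, ∑ j,
            f j (w i) * (bp.repr (sp i) p * bm.repr (sm j) q)) • Γ (bp p) (bm q) := by
          simp [Finset.sum_smul]
      _ = 0 := by simp [hcoef]
end

section
/- Let W be a complex symplectic vector space of dimension 4 and S = ℂ⁴ the spin representation of so(5,ℂ) with its symplectic form, Λ²(S) ≅ ℂ·π_S ⊕ V. If Q ∈ S ⊗ W has rank 2 as a map W* → S and squares to zero, and the image of the dual map S* → W is Lagrangian, then: (a) if the image of W* → S is a symplectic subspace of S, the image of [Q,−] : S ⊗ W → V is all of V (Q is topological); (b) if the image of W* → S is Lagrangian in S, the image of [Q,−] is a proper subspace of V. -/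
open Module


private lemma alt_anti {S M : Type*} [AddCommGroup S] [Module ℂ S]
    [AddCommGroup M] [Module ℂ M]
    (ω : S →ₗ[ℂ] S →ₗ[ℂ] M) (h : ∀ x, ω x x = 0) (a b : S) : ω b a = - ω a b := by
  have h2 := h (a + b)
  simp only [map_add, LinearMap.add_apply, h a, h b, zero_add, add_zero] at h2
  rw [eq_neg_of_add_eq_zero_left h2]

private lemma omega_surj {S : Type*} [AddCommGroup S] [Module ℂ S] [FiniteDimensional ℂ S]
    (ω : S →ₗ[ℂ] S →ₗ[ℂ] ℂ) (hnd : ∀ s, (∀ t, ω s t = 0) → s = 0) :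
    Function.Surjective ω := by
  have hinj : Function.Injective ω := by
    rw [← LinearMap.ker_eq_bot]
    rw [LinearMap.ker_eq_bot']
    intro m hm
    exact hnd m (fun t => by rw [hm]; rfl)
  exact (LinearMap.injective_iff_surjective_of_finrank_eq_finrank
    Subspace.dual_finrank_eq.symm).mp hinj

private lemma ind2 {S : Type*} [AddCommGroup S] [Module ℂ S] (α β : Module.Dual ℂ S)
    (h : ∀ c₁ c₂ : ℂ, c₁ • α + c₂ • β = 0 → c₁ = 0 ∧ c₂ = 0) :
    ∃ t, α t = 1 ∧ β t = 0 := by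
  have hα : ∃ t, α t ≠ 0 := by
    by_contra h0
    push_neg at h0
    have hz : (1:ℂ) • α + (0:ℂ) • β = 0 := by
      ext t; simp [h0 t]
    exact one_ne_zero (h _ _ hz).1
  obtain ⟨t₀, ht₀⟩ := hα
  have ht₁ : α ((α t₀)⁻¹ • t₀) = 1 := by
    simp [map_smul, inv_mul_cancel₀ ht₀]
  set t₁ := (α t₀)⁻¹ • t₀
  by_cases hb : β t₁ = 0
  · exact ⟨t₁, ht₁, hb⟩
  · have hu : ∃ u, α u = 0 ∧ β u ≠ 0 := by
      by_contra h0
      push_neg at h0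
      have hall : ∀ x, β x = β t₁ * α x := by
        intro x
        have h1 : α (x - α x • t₁) = 0 := by simp [map_sub, map_smul, ht₁]
        have h2 : β (x - α x • t₁) = 0 := h0 _ h1
        simp only [map_sub, map_smul, smul_eq_mul] at h2
        linear_combination h2
      have hz : (β t₁) • α + (-1 : ℂ) • β = 0 := by
        ext x
        simp only [LinearMap.add_apply, LinearMap.smul_apply, smul_eq_mul, hall x,
          LinearMap.zero_apply]
        ring
      have := (h _ _ hz).2
      norm_num at this
    obtain ⟨u, hu0, hune⟩ := hu
    refine ⟨t₁ - (β t₁ / β u) • u, ?_, ?_⟩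
    · simp [map_sub, map_smul, ht₁, hu0]
    · simp only [map_sub, map_smul, smul_eq_mul]
      field_simp
      ring

/-- Dimension 5, rank 2: for a square-zero supercharge `Q = ∑ sᵢ ⊗ wᵢ ∈ S ⊗ W`
of rank 2 whose image in `W` (of the dual map `S* → W`) is Lagrangian:
(a) if the image `ImS` of `W* → S` is a symplectic subspace, then the image of
`[Q,−]` is all of `V` (`Q` is topological);
(b) if `ImS` is Lagrangian, the image of `[Q,−]` is a proper subspace of `V`. -/
theorem stmt7
    {S V W : Type*}
    [AddCommGroup S] [Module ℂ S] [FiniteDimensional ℂ S]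
    [AddCommGroup V] [Module ℂ V] [FiniteDimensional ℂ V]
    [AddCommGroup W] [Module ℂ W] [FiniteDimensional ℂ W]
    (hS : finrank ℂ S = 4) (hV : finrank ℂ V = 5) (hW : finrank ℂ W = 4)
    (ωS : S →ₗ[ℂ] S →ₗ[ℂ] ℂ) (hωSalt : ∀ s : S, ωS s s = 0)
    (hωSnd : ∀ s : S, (∀ t : S, ωS s t = 0) → s = 0)
    (πS : Module.Dual ℂ S →ₗ[ℂ] Module.Dual ℂ S →ₗ[ℂ] ℂ)
    (hπS : ∀ s t : S, πS (ωS s) (ωS t) = ωS s t)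
    (Γ : S →ₗ[ℂ] S →ₗ[ℂ] V) (hΓalt : ∀ s : S, Γ s s = 0)
    (hΓker : ∀ (m : ℕ) (a b : Fin m → S),
      (∑ i, Γ (a i) (b i)) = 0 ↔
        ∃ lam : ℂ, ∀ α β : Module.Dual ℂ S,
          (∑ i, (α (a i) * β (b i) - α (b i) * β (a i))) = lam * πS α β)
    (hΓsurj : Submodule.span ℂ {v : V | ∃ a b : S, Γ a b = v} = ⊤)
    (ω : W →ₗ[ℂ] W →ₗ[ℂ] ℂ) (hωalt : ∀ u : W, ω u u = 0)
    (hωnd : ∀ u : W, (∀ v : W, ω u v = 0) → u = 0)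
    (k : ℕ) (s : Fin k → S) (w : Fin k → W)
    -- the images of the maps W* → S and S* → W induced by Q
    (ImS : Submodule ℂ S)
    (hImS : ImS = Submodule.span ℂ
      {x : S | ∃ g : Module.Dual ℂ W, (∑ i, g (w i) • s i) = x})
    (ImW : Submodule ℂ W)
    (hImW : ImW = Submodule.span ℂ
      {x : W | ∃ f : Module.Dual ℂ S, (∑ i, f (s i) • w i) = x})
    -- Q has rank 2
    (hrank : finrank ℂ ImS = 2)
    -- Q squares to zero
    (hsq : (∑ i, ∑ j, ω (w i) (w j) • Γ (s i) (s j)) = 0)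
    -- the image of the dual map S* → W is Lagrangian
    (hLagW : (∀ u ∈ ImW, ∀ v ∈ ImW, ω u v = 0) ∧ finrank ℂ ImW = 2)
    -- the image of [Q,−] : S ⊗ W → V
    (ImBr : Submodule ℂ V)
    (hImBr : ImBr = Submodule.span ℂ
      {v : V | ∃ (u : W) (t : S), (∑ i, ω (w i) u • Γ (s i) t) = v}) :
    ((∀ x ∈ ImS, x ≠ 0 → ∃ y ∈ ImS, ωS x y ≠ 0) → ImBr = ⊤) ∧
    ((∀ x ∈ ImS, ∀ y ∈ ImS, ωS x y = 0) → ImBr ≠ ⊤) := by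
  classical
  -- antisymmetry
  have hSanti : ∀ a b : S, ωS b a = - ωS a b := alt_anti ωS hωSalt
  have hWanti : ∀ a b : W, ω b a = - ω a b := alt_anti ω hωalt
  have hΓanti : ∀ a b : S, Γ b a = - Γ a b := alt_anti Γ hΓalt
  -- surjectivity of ωS : S → Dual S
  have hsurjωS : Function.Surjective ωS := omega_surj ωS hωSnd
  -- surjectivity of ω.flip : W → Dual W
  have hsurjflip : Function.Surjective ω.flip := by
    apply omega_surj
    intro u hu
    refine hωnd u (fun v => ?_)
    have h2 := hu v
    rw [LinearMap.flip_apply] at h2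
    rw [hWanti v u, h2, neg_zero]
  -- the linear map L : Dual W → S,  g ↦ ∑ g (w i) • s i
  set L : Module.Dual ℂ W →ₗ[ℂ] S :=
    { toFun := fun g => ∑ i, g (w i) • s i
      map_add' := by intro g h; simp [add_smul, Finset.sum_add_distrib]
      map_smul' := by intro c g; simp [smul_smul, Finset.smul_sum] } with hLdef
  have hLapp : ∀ g : Module.Dual ℂ W, L g = ∑ i, g (w i) • s i := fun g => rfl
  have hrange : ImS = LinearMap.range L := by
    rw [hImS]
    have hset : {x : S | ∃ g : Module.Dual ℂ W, (∑ i, g (w i) • s i) = x}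
        = ↑(LinearMap.range L) := by
      ext x
      constructor
      · rintro ⟨g, rfl⟩; exact ⟨g, rfl⟩
      · rintro ⟨g, rfl⟩; exact ⟨g, rfl⟩
    rw [hset, Submodule.span_eq]
  -- generator description of ImBr
  have hgen : {v : V | ∃ (u : W) (t : S), (∑ i, ω (w i) u • Γ (s i) t) = v}
      = {v : V | ∃ x ∈ ImS, ∃ t : S, Γ x t = v} := by
    ext v
    constructor
    · rintro ⟨u, t, rfl⟩
      refine ⟨L (ω.flip u), by rw [hrange]; exact LinearMap.mem_range_self _ _, t, ?_⟩
      rw [hLapp]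
      simp [map_sum, LinearMap.sum_apply, map_smul, LinearMap.smul_apply]
    · rintro ⟨x, hx, t, rfl⟩
      rw [hrange] at hx
      obtain ⟨g, rfl⟩ := hx
      obtain ⟨u, rfl⟩ := hsurjflip g
      refine ⟨u, t, ?_⟩
      rw [hLapp]
      simp [map_sum, LinearMap.sum_apply, map_smul, LinearMap.smul_apply]
  have hImBr' : ImBr = Submodule.span ℂ {v : V | ∃ x ∈ ImS, ∃ t : S, Γ x t = v} := by
    rw [hImBr, hgen]
  have memBr : ∀ x ∈ ImS, ∀ t : S, Γ x t ∈ ImBr := by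
    intro x hx t
    rw [hImBr']
    exact Submodule.subset_span ⟨x, hx, t, rfl⟩
  constructor
  · -- (a) symplectic case
    intro hsymp
    have hIm_ne : ∃ x ∈ ImS, x ≠ 0 := by
      by_contra h0
      push_neg at h0
      have hbot : ImS = ⊥ := by
        rw [Submodule.eq_bot_iff]; exact h0
      rw [hbot, finrank_bot] at hrank
      norm_num at hrank
    obtain ⟨s₁, hs₁I, hs₁0⟩ := hIm_ne
    obtain ⟨y, hyI, hy0⟩ := hsymp s₁ hs₁I hs₁0
    obtain ⟨s₂, hs₂I, h12⟩ : ∃ z ∈ ImS, ωS s₁ z = 1 :=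
      ⟨(ωS s₁ y)⁻¹ • y, Submodule.smul_mem _ _ hyI, by
        rw [map_smul, smul_eq_mul, inv_mul_cancel₀ hy0]⟩
    have h21 : ωS s₂ s₁ = -1 := by rw [hSanti, h12]
    have h11 : ωS s₁ s₁ = 0 := hωSalt s₁
    have h22 : ωS s₂ s₂ = 0 := hωSalt s₂
    set P := LinearMap.ker (ωS s₁) ⊓ LinearMap.ker (ωS s₂) with hPdef
    have hPmem : ∀ t : S, t - ωS s₁ t • s₂ + ωS s₂ t • s₁ ∈ P := by
      intro t
      rw [hPdef, Submodule.mem_inf, LinearMap.mem_ker, LinearMap.mem_ker]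
      constructor
      · simp only [map_add, map_sub, map_smul, smul_eq_mul, h12, h11]; ring
      · simp only [map_add, map_sub, map_smul, smul_eq_mul, h21, h22]; ring
    have hli2 : LinearIndependent ℂ ![s₁, s₂] := by
      rw [Fintype.linearIndependent_iff]
      intro g hg
      rw [Fin.sum_univ_two] at hg
      simp only [Matrix.cons_val_zero, Matrix.cons_val_one, Matrix.head_cons] at hg
      have e1 := congrArg (ωS s₁) hg
      have e2 := congrArg (ωS s₂) hg
      simp only [map_add, map_smul, smul_eq_mul, h11, h12, h21, h22, map_zero,
        mul_zero, mul_one, mul_neg_one, zero_add, add_zero, neg_eq_zero] at e1 e2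
      intro i
      fin_cases i
      · simpa using e2
      · simpa using e1
    have hspan2 : finrank ℂ (Submodule.span ℂ ({s₁, s₂} : Set S)) = 2 := by
      have hr : Set.range ![s₁, s₂] = {s₁, s₂} := by
        ext x; simp [Fin.exists_fin_two]; tauto
      rw [← hr, finrank_span_eq_card hli2]
      simp
    have hsup : Submodule.span ℂ ({s₁, s₂} : Set S) ⊔ P = ⊤ := by
      rw [eq_top_iff]
      intro t _
      rw [Submodule.mem_sup]
      refine ⟨(-(ωS s₂ t)) • s₁ + (ωS s₁ t) • s₂, Submodule.mem_span_pair.mpr ⟨_, _, rfl⟩,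
        t - ωS s₁ t • s₂ + ωS s₂ t • s₁, hPmem t, ?_⟩
      simp only [neg_smul]
      abel
    have hinf : Submodule.span ℂ ({s₁, s₂} : Set S) ⊓ P = ⊥ := by
      rw [eq_bot_iff]
      rintro x ⟨hx1, hx2⟩
      obtain ⟨m, n, rfl⟩ := Submodule.mem_span_pair.mp hx1
      rw [hPdef] at hx2
      simp only [SetLike.mem_coe, Submodule.mem_inf, LinearMap.mem_ker] at hx2
      obtain ⟨k1, k2⟩ := hx2
      simp only [map_add, map_smul, smul_eq_mul, h11, h12, h21, h22, mul_zero, mul_one,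
        mul_neg_one, zero_add, add_zero, neg_eq_zero] at k1 k2
      rw [k1, k2]
      simp
    have hPrank : finrank ℂ P = 2 := by
      have hh := Submodule.finrank_sup_add_finrank_inf_eq
        (Submodule.span ℂ ({s₁, s₂} : Set S)) P
      rw [hsup, hinf, hspan2, finrank_top, finrank_bot, hS] at hh
      omega
    obtain ⟨f₃, f₄'', hf3P, hf4P, hPspan, hf3ne⟩ :
        ∃ a b : S, a ∈ P ∧ b ∈ P ∧ (∀ r ∈ P, ∃ p q : ℂ, r = p • a + q • b) ∧ a ≠ 0 := by
      have bP := finBasisOfFinrankEq ℂ P hPrank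
      refine ⟨(bP 0 : S), (bP 1 : S), (bP 0).2, (bP 1).2, ?_, ?_⟩
      · intro r hr
        have hsr := bP.sum_repr ⟨r, hr⟩
        rw [Fin.sum_univ_two] at hsr
        refine ⟨bP.repr ⟨r, hr⟩ 0, bP.repr ⟨r, hr⟩ 1, ?_⟩
        have hc := congrArg (Subtype.val) hsr
        simp only [Submodule.coe_add, SetLike.val_smul] at hc
        exact hc.symm
      · intro h0
        exact bP.ne_zero 0 (by rwa [← Submodule.coe_eq_zero])
    have h13 : ωS s₁ f₃ = 0 := by
      have := (Submodule.mem_inf.mp (hPdef ▸ hf3P)).1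
      rwa [LinearMap.mem_ker] at this
    have h23 : ωS s₂ f₃ = 0 := by
      have := (Submodule.mem_inf.mp (hPdef ▸ hf3P)).2
      rwa [LinearMap.mem_ker] at this
    have h14'' : ωS s₁ f₄'' = 0 := by
      have := (Submodule.mem_inf.mp (hPdef ▸ hf4P)).1
      rwa [LinearMap.mem_ker] at this
    have h24'' : ωS s₂ f₄'' = 0 := by
      have := (Submodule.mem_inf.mp (hPdef ▸ hf4P)).2
      rwa [LinearMap.mem_ker] at this
    have h31 : ωS f₃ s₁ = 0 := by rw [hSanti, h13, neg_zero]
    have h32 : ωS f₃ s₂ = 0 := by rw [hSanti, h23, neg_zero]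
    set d := ωS f₃ f₄'' with hddef
    have hd : d ≠ 0 := by
      intro hd0
      apply hf3ne
      apply hωSnd
      intro t
      obtain ⟨p, q, hpq⟩ := hPspan _ (hPmem t)
      have ht : t = ωS s₁ t • s₂ - ωS s₂ t • s₁ + (p • f₃ + q • f₄'') := by
        rw [← hpq]; abel
      rw [ht]
      simp only [map_add, map_sub, map_smul, smul_eq_mul]
      rw [h31, h32, hωSalt, ← hddef, hd0]
      ring
    obtain ⟨f₄, hf4d, h14, h24, h34⟩ :
        ∃ z : S, f₄'' = d • z ∧ ωS s₁ z = 0 ∧ ωS s₂ z = 0 ∧ ωS f₃ z = 1 :=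
      ⟨d⁻¹ • f₄'', by rw [smul_smul, mul_inv_cancel₀ hd, one_smul],
        by rw [map_smul, smul_eq_mul, h14'', mul_zero],
        by rw [map_smul, smul_eq_mul, h24'', mul_zero],
        by rw [map_smul, smul_eq_mul, ← hddef, inv_mul_cancel₀ hd]⟩
    have h41 : ωS f₄ s₁ = 0 := by rw [hSanti, h14, neg_zero]
    have h42 : ωS f₄ s₂ = 0 := by rw [hSanti, h24, neg_zero]
    have h43 : ωS f₄ f₃ = -1 := by rw [hSanti, h34]
    have h33 : ωS f₃ f₃ = 0 := hωSalt f₃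
    have h44 : ωS f₄ f₄ = 0 := hωSalt f₄
    have hdec : ∀ t : S, ∃ a b c e : ℂ, t = a • s₁ + b • s₂ + c • f₃ + e • f₄ := by
      intro t
      obtain ⟨p, q, hpq⟩ := hPspan _ (hPmem t)
      refine ⟨-(ωS s₂ t), ωS s₁ t, p, q * d, ?_⟩
      have ht : t = ωS s₁ t • s₂ - ωS s₂ t • s₁ + (p • f₃ + q • f₄'') := by
        rw [← hpq]; abel
      nth_rewrite 1 [ht]
      rw [hf4d, smul_smul]
      simp only [neg_smul]
      abel
    have key : ∀ x y : S, ωS x y =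
        ωS x s₁ * ωS y s₂ - ωS x s₂ * ωS y s₁ + ωS x f₃ * ωS y f₄ - ωS x f₄ * ωS y f₃ := by
      intro x y
      obtain ⟨a0, a1, a2, a3, hx⟩ := hdec x
      obtain ⟨b0, b1, b2, b3, hy⟩ := hdec y
      rw [hx, hy]
      simp only [map_add, map_smul, LinearMap.add_apply, LinearMap.smul_apply, smul_eq_mul,
        h11, h12, h13, h14, h21, h22, h23, h24, h31, h32, h33, h34, h41, h42, h43, h44]
      ring
    have hπ : ∀ α β : Module.Dual ℂ S, πS α β =
        α s₁ * β s₂ - α s₂ * β s₁ + α f₃ * β f₄ - α f₄ * β f₃ := by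
      intro α β
      obtain ⟨x, rfl⟩ := hsurjωS α
      obtain ⟨y, rfl⟩ := hsurjωS β
      rw [hπS]; exact key x y
    have hrel : Γ s₁ s₂ + Γ f₃ f₄ = 0 := by
      have hlam : ∀ α β : Module.Dual ℂ S,
          (∑ i : Fin 2, (α (![s₁, f₃] i) * β (![s₂, f₄] i)
            - α (![s₂, f₄] i) * β (![s₁, f₃] i))) = 1 * πS α β := by
        intro α β
        rw [Fin.sum_univ_two]
        simp only [Matrix.cons_val_zero, Matrix.cons_val_one, Matrix.head_cons]
        rw [hπ α β]; ring
      have h := (hΓker 2 ![s₁, f₃] ![s₂, f₄]).mpr ⟨1, hlam⟩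
      rw [Fin.sum_univ_two] at h
      simpa using h
    have hrel' : Γ f₃ f₄ = - Γ s₁ s₂ := by
      rw [add_comm] at hrel
      exact eq_neg_of_add_eq_zero_left hrel
    have m1 : ∀ t, Γ s₁ t ∈ ImBr := fun t => memBr s₁ hs₁I t
    have m2 : ∀ t, Γ s₂ t ∈ ImBr := fun t => memBr s₂ hs₂I t
    have m3 : ∀ t, Γ f₃ t ∈ ImBr := by
      intro t
      obtain ⟨b0, b1, b2, b3, ht⟩ := hdec t
      rw [ht]
      simp only [map_add, map_smul]
      refine add_mem (add_mem (add_mem ?_ ?_) ?_) ?_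
      · exact Submodule.smul_mem _ _ (by rw [hΓanti s₁ f₃]; exact neg_mem (m1 _))
      · exact Submodule.smul_mem _ _ (by rw [hΓanti s₂ f₃]; exact neg_mem (m2 _))
      · exact Submodule.smul_mem _ _ (by rw [hΓalt f₃]; exact zero_mem _)
      · exact Submodule.smul_mem _ _ (by rw [hrel']; exact neg_mem (m1 _))
    have m4 : ∀ t, Γ f₄ t ∈ ImBr := by
      intro t
      obtain ⟨b0, b1, b2, b3, ht⟩ := hdec t
      rw [ht]
      simp only [map_add, map_smul]
      refine add_mem (add_mem (add_mem ?_ ?_) ?_) ?_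
      · exact Submodule.smul_mem _ _ (by rw [hΓanti s₁ f₄]; exact neg_mem (m1 _))
      · exact Submodule.smul_mem _ _ (by rw [hΓanti s₂ f₄]; exact neg_mem (m2 _))
      · exact Submodule.smul_mem _ _
          (by rw [hΓanti f₃ f₄, hrel']; exact neg_mem (neg_mem (m1 _)))
      · exact Submodule.smul_mem _ _ (by rw [hΓalt f₄]; exact zero_mem _)
    rw [eq_top_iff, ← hΓsurj]
    refine Submodule.span_le.mpr ?_
    rintro v ⟨a, b, rfl⟩
    obtain ⟨a0, a1, a2, a3, ha⟩ := hdec a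
    rw [ha]
    simp only [map_add, map_smul, LinearMap.add_apply, LinearMap.smul_apply]
    exact add_mem (add_mem (add_mem (Submodule.smul_mem _ _ (m1 b))
      (Submodule.smul_mem _ _ (m2 b))) (Submodule.smul_mem _ _ (m3 b)))
      (Submodule.smul_mem _ _ (m4 b))
  · -- (b) Lagrangian case
    intro hLagS htop
    obtain ⟨s₁, s₂, hs₁I, hs₂I, hspanI, hli2⟩ :
        ∃ a b : S, a ∈ ImS ∧ b ∈ ImS ∧ (∀ x ∈ ImS, ∃ p q : ℂ, x = p • a + q • b) ∧
          (∀ p q : ℂ, p • a + q • b = 0 → p = 0 ∧ q = 0) := by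
      have bI := finBasisOfFinrankEq ℂ ImS hrank
      refine ⟨(bI 0 : S), (bI 1 : S), (bI 0).2, (bI 1).2, ?_, ?_⟩
      · intro x hx
        have hsr := bI.sum_repr ⟨x, hx⟩
        rw [Fin.sum_univ_two] at hsr
        refine ⟨bI.repr ⟨x, hx⟩ 0, bI.repr ⟨x, hx⟩ 1, ?_⟩
        have hc := congrArg (Subtype.val) hsr
        simp only [Submodule.coe_add, SetLike.val_smul] at hc
        exact hc.symm
      · intro p q hpq
        have h0 : p • bI 0 + q • bI 1 = (0 : ImS) := by
          apply Subtype.val_injective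
          simp only [Submodule.coe_add, SetLike.val_smul, ZeroMemClass.coe_zero]
          exact hpq
        have hli := Fintype.linearIndependent_iff.mp bI.linearIndependent ![p, q] (by
          rw [Fin.sum_univ_two]
          simpa using h0)
        exact ⟨by simpa using hli 0, by simpa using hli 1⟩
    have h11 : ωS s₁ s₁ = 0 := hωSalt s₁
    have h22 : ωS s₂ s₂ = 0 := hωSalt s₂
    have h12 : ωS s₁ s₂ = 0 := hLagS s₁ hs₁I s₂ hs₂I
    have h21 : ωS s₂ s₁ = 0 := hLagS s₂ hs₂I s₁ hs₁I
    have hpair : ∀ c₁ c₂ : ℂ, c₁ • ωS s₁ + c₂ • ωS s₂ = 0 → c₁ = 0 ∧ c₂ = 0 := by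
      intro c₁ c₂ h
      have h0 : c₁ • s₁ + c₂ • s₂ = 0 := by
        apply hωSnd
        intro t
        have hcf := DFunLike.congr_fun h t
        simp only [LinearMap.add_apply, LinearMap.smul_apply, smul_eq_mul,
          LinearMap.zero_apply] at hcf
        rw [map_add, map_smul, map_smul, LinearMap.add_apply, LinearMap.smul_apply,
          LinearMap.smul_apply, smul_eq_mul, smul_eq_mul]
        exact hcf
      exact hli2 _ _ h0
    obtain ⟨f₃, h13, h23⟩ := ind2 (ωS s₁) (ωS s₂) hpair
    have hpair' : ∀ c₁ c₂ : ℂ, c₁ • ωS s₂ + c₂ • ωS s₁ = 0 → c₁ = 0 ∧ c₂ = 0 := by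
      intro c₁ c₂ h
      have hp := hpair c₂ c₁ (by rw [add_comm]; exact h)
      exact ⟨hp.2, hp.1⟩
    obtain ⟨g₄, h24g, h14g⟩ := ind2 (ωS s₂) (ωS s₁) hpair'
    have h31 : ωS f₃ s₁ = -1 := by rw [hSanti, h13]
    obtain ⟨f₄, h14, h24, h34⟩ : ∃ z : S, ωS s₁ z = 0 ∧ ωS s₂ z = 1 ∧ ωS f₃ z = 0 :=
      ⟨g₄ + (ωS f₃ g₄) • s₁,
        by rw [map_add, map_smul, smul_eq_mul, h14g, h11, mul_zero, add_zero],
        by rw [map_add, map_smul, smul_eq_mul, h24g, h21, mul_zero, add_zero],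
        by rw [map_add, map_smul, smul_eq_mul, h31]; ring⟩
    have h32 : ωS f₃ s₂ = 0 := by rw [hSanti, h23, neg_zero]
    have h41 : ωS f₄ s₁ = 0 := by rw [hSanti, h14, neg_zero]
    have h42 : ωS f₄ s₂ = -1 := by rw [hSanti, h24]
    have h43 : ωS f₄ f₃ = 0 := by rw [hSanti, h34, neg_zero]
    have h33 : ωS f₃ f₃ = 0 := hωSalt f₃
    have h44 : ωS f₄ f₄ = 0 := hωSalt f₄
    have hli4 : LinearIndependent ℂ ![s₁, s₂, f₃, f₄] := by
      rw [Fintype.linearIndependent_iff]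
      intro g hg
      rw [Fin.sum_univ_four] at hg
      simp only [Matrix.cons_val_zero, Matrix.cons_val_one, Matrix.head_cons,
        Matrix.cons_val_two, Matrix.tail_cons, Matrix.cons_val_three] at hg
      have e1 := congrArg (ωS s₁) hg
      have e2 := congrArg (ωS s₂) hg
      have e3 := congrArg (ωS f₃) hg
      have e4 := congrArg (ωS f₄) hg
      simp only [map_add, map_smul, smul_eq_mul, map_zero, h11, h12, h13, h14, h21, h22,
        h23, h24, h31, h32, h33, h34, h41, h42, h43, h44, mul_zero, mul_one, zero_add,
        add_zero, mul_neg_one, neg_eq_zero] at e1 e2 e3 e4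
      intro i
      fin_cases i
      · simpa using e3
      · simpa using e4
      · simpa using e1
      · simpa using e2
    have hcard4 : Fintype.card (Fin 4) = finrank ℂ S := by rw [Fintype.card_fin, hS]
    obtain ⟨E, hE⟩ : ∃ E : Basis (Fin 4) ℂ S, ⇑E = ![s₁, s₂, f₃, f₄] :=
      ⟨basisOfLinearIndependentOfCardEqFinrank hli4 hcard4,
        coe_basisOfLinearIndependentOfCardEqFinrank hli4 hcard4⟩
    have hdec : ∀ t : S, ∃ a b c e : ℂ, t = a • s₁ + b • s₂ + c • f₃ + e • f₄ := by
      intro t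
      refine ⟨E.repr t 0, E.repr t 1, E.repr t 2, E.repr t 3, ?_⟩
      nth_rewrite 1 [← E.sum_repr t]
      rw [Fin.sum_univ_four, hE]
      simp only [Matrix.cons_val_zero, Matrix.cons_val_one, Matrix.head_cons,
        Matrix.cons_val_two, Matrix.tail_cons, Matrix.cons_val_three]
    have key : ∀ x y : S, ωS x y =
        ωS x s₁ * ωS y f₃ - ωS x f₃ * ωS y s₁ + ωS x s₂ * ωS y f₄ - ωS x f₄ * ωS y s₂ := by
      intro x y
      obtain ⟨a0, a1, a2, a3, hx⟩ := hdec x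
      obtain ⟨b0, b1, b2, b3, hy⟩ := hdec y
      rw [hx, hy]
      simp only [map_add, map_smul, LinearMap.add_apply, LinearMap.smul_apply, smul_eq_mul,
        h11, h12, h13, h14, h21, h22, h23, h24, h31, h32, h33, h34, h41, h42, h43, h44]
      ring
    have hπ : ∀ α β : Module.Dual ℂ S, πS α β =
        α s₁ * β f₃ - α f₃ * β s₁ + α s₂ * β f₄ - α f₄ * β s₂ := by
      intro α β
      obtain ⟨x, rfl⟩ := hsurjωS α
      obtain ⟨y, rfl⟩ := hsurjωS β
      rw [hπS]; exact key x y
    have hrel : Γ s₁ f₃ + Γ s₂ f₄ = 0 := by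
      have hlam : ∀ α β : Module.Dual ℂ S,
          (∑ i : Fin 2, (α (![s₁, s₂] i) * β (![f₃, f₄] i)
            - α (![f₃, f₄] i) * β (![s₁, s₂] i))) = 1 * πS α β := by
        intro α β
        rw [Fin.sum_univ_two]
        simp only [Matrix.cons_val_zero, Matrix.cons_val_one, Matrix.head_cons]
        rw [hπ α β]; ring
      have h := (hΓker 2 ![s₁, s₂] ![f₃, f₄]).mpr ⟨1, hlam⟩
      rw [Fin.sum_univ_two] at h
      simpa using h
    have hrel' : Γ s₂ f₄ = - Γ s₁ f₃ := by
      rw [add_comm] at hrel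
      exact eq_neg_of_add_eq_zero_left hrel
    set M := Submodule.span ℂ
      (Set.range ![Γ s₁ s₂, Γ s₁ f₃, Γ s₁ f₄, Γ s₂ f₃]) with hM
    have g1 : Γ s₁ s₂ ∈ M := Submodule.subset_span ⟨0, rfl⟩
    have g2 : Γ s₁ f₃ ∈ M := Submodule.subset_span ⟨1, rfl⟩
    have g3 : Γ s₁ f₄ ∈ M := Submodule.subset_span ⟨2, rfl⟩
    have g4 : Γ s₂ f₃ ∈ M := Submodule.subset_span ⟨3, rfl⟩
    have hrow1 : ∀ t, Γ s₁ t ∈ M := by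
      intro t
      obtain ⟨a, b, c, e, ht⟩ := hdec t
      rw [ht]
      simp only [map_add, map_smul]
      refine add_mem (add_mem (add_mem ?_ ?_) ?_) ?_
      · exact Submodule.smul_mem _ _ (by rw [hΓalt s₁]; exact zero_mem _)
      · exact Submodule.smul_mem _ _ g1
      · exact Submodule.smul_mem _ _ g2
      · exact Submodule.smul_mem _ _ g3
    have hrow2 : ∀ t, Γ s₂ t ∈ M := by
      intro t
      obtain ⟨a, b, c, e, ht⟩ := hdec t
      rw [ht]
      simp only [map_add, map_smul]
      refine add_mem (add_mem (add_mem ?_ ?_) ?_) ?_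
      · exact Submodule.smul_mem _ _ (by rw [hΓanti s₁ s₂]; exact neg_mem g1)
      · exact Submodule.smul_mem _ _ (by rw [hΓalt s₂]; exact zero_mem _)
      · exact Submodule.smul_mem _ _ g4
      · exact Submodule.smul_mem _ _ (by rw [hrel']; exact neg_mem g2)
    have hMle : ImBr ≤ M := by
      rw [hImBr']
      refine Submodule.span_le.mpr ?_
      rintro v ⟨x, hx, t, rfl⟩
      obtain ⟨p, q, hx'⟩ := hspanI x hx
      rw [hx']
      simp only [map_add, map_smul, LinearMap.add_apply, LinearMap.smul_apply]
      exact add_mem (Submodule.smul_mem _ _ (hrow1 t)) (Submodule.smul_mem _ _ (hrow2 t))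
    have hMtop : M = ⊤ := top_unique (htop ▸ hMle)
    have h5 : finrank ℂ M = 5 := by rw [hMtop, finrank_top]; exact hV
    have h4 : finrank ℂ M ≤ 4 := by
      rw [hM]
      refine le_trans (finrank_span_le_card _) ?_
      rw [Set.toFinset_range]
      refine le_trans Finset.card_image_le ?_
      simp
    omega
end

section
/- Consider a supercharge Q ∈ S ⊗ W in any dimension n, where S (odd n) or S₊ ⊕ S₋ (even n) carries the nondegenerate vector-valued pairing Γ into V = ℂⁿ, and W is an auxiliary space as in the classification of spinorial representations. Then the image S_Q of the map [Q,−] : Σ → V has dimension at least n/2. -/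
open Module CliffordAlgebra

/-- For an arbitrary supercharge `Q = ∑ Qᵢ ⊗ wᵢ` in a spinorial representation
`Σ = S ⊗ W` in dimension `n` (with `S` an irreducible Clifford module carrying
the invariant pairing `pr` and vector-valued pairing `Γ`, and `W` carrying a
nondegenerate symmetric pairing), the image `S_Q = Γ(Q, Σ) ⊆ V` of `[Q,−]`
has dimension at least `n/2`. -/
theorem stmt8
    {V : Type*} [AddCommGroup V] [Module ℂ V] [FiniteDimensional ℂ V]
    (Qf : QuadraticForm ℂ V) (B : V →ₗ[ℂ] V →ₗ[ℂ] ℂ)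
    (hBsymm : ∀ v w : V, B v w = B w v)
    (hQB : ∀ v : V, Qf v = B v v)
    (hBnd : ∀ v : V, (∀ w : V, B v w = 0) → v = 0)
    {S : Type*} [AddCommGroup S] [Module ℂ S] [FiniteDimensional ℂ S]
    [Module (CliffordAlgebra Qf) S] [IsScalarTower ℂ (CliffordAlgebra Qf) S]
    [IsSimpleModule (CliffordAlgebra Qf) S]
    (pr : S →ₗ[ℂ] S →ₗ[ℂ] ℂ)
    (hprnd : ∀ s : S, s ≠ 0 → ∃ t : S, pr s t ≠ 0)
    (hprinv : ∀ v : V, Qf v = 1 → ∀ s t : S, pr (ι Qf v • s) (ι Qf v • t) = pr s t)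
    (Γ : S →ₗ[ℂ] S →ₗ[ℂ] V)
    (hΓ : ∀ (v : V) (s t : S), B v (Γ s t) = pr (ι Qf v • s) t)
    {W : Type*} [AddCommGroup W] [Module ℂ W] [FiniteDimensional ℂ W]
    (BW : W →ₗ[ℂ] W →ₗ[ℂ] ℂ)
    (hBWsym : ∀ u v : W, BW u v = BW v u)
    (hBWnd : ∀ u : W, (∀ v : W, BW u v = 0) → u = 0)
    (k : ℕ) (wb : Basis (Fin k) ℂ W)
    (Qs : Fin k → S) (hQ : ∃ i, Qs i ≠ 0) :
    finrank ℂ V ≤ 2 * finrank ℂ (Submodule.span ℂ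
      {v : V | ∃ (x : W) (t : S), (∑ i, BW (wb i) x • Γ (Qs i) t) = v}) := by
  classical
  set U : Submodule ℂ V := Submodule.span ℂ
      {v : V | ∃ (x : W) (t : S), (∑ i, BW (wb i) x • Γ (Qs i) t) = v} with hU
  have hrefl : B.IsRefl := fun v w h => by rw [hBsymm]; exact h
  have hnd : LinearMap.BilinForm.Nondegenerate B :=
    hrefl.nondegenerate_iff_separatingLeft.mpr (fun v h => hBnd v h)
  -- the map x ↦ (BW (wb j) x)_j is bijective
  have hφ : ∀ i : Fin k, ∃ x : W, ∀ j : Fin k, BW (wb j) x = if j = i then 1 else 0 := by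
    intro i
    let φ : W →ₗ[ℂ] (Fin k → ℂ) := LinearMap.pi (fun j => BW (wb j))
    have hinj : Function.Injective φ := by
      rw [← LinearMap.ker_eq_bot, Submodule.eq_bot_iff]
      intro x hx
      have hx' : ∀ j, BW (wb j) x = 0 := fun j => congrFun hx j
      refine hBWnd x (fun v => ?_)
      rw [hBWsym]
      have : ∀ w : W, BW w x = 0 := by
        intro w
        have := Basis.sum_repr wb w
        calc BW w x = BW (∑ j, wb.repr w j • wb j) x := by rw [this]
          _ = ∑ j, wb.repr w j * BW (wb j) x := by
              rw [map_sum]; simp [LinearMap.smul_apply]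
          _ = 0 := by simp [hx']
      exact this v
    have hdim : finrank ℂ W = finrank ℂ (Fin k → ℂ) := by
      simp [finrank_eq_card_basis wb]
    have hsurj : Function.Surjective φ :=
      (LinearMap.injective_iff_surjective_of_finrank_eq_finrank hdim).mp hinj
    obtain ⟨x, hx⟩ := hsurj (Pi.single i 1)
    exact ⟨x, fun j => by
      have := congrFun hx j
      simpa [φ, Pi.single_apply] using this⟩
  -- each Γ (Qs i) t lies in U
  have hmem : ∀ (i : Fin k) (t : S), Γ (Qs i) t ∈ U := by
    intro i t
    obtain ⟨x, hx⟩ := hφ i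
    apply Submodule.subset_span
    refine ⟨x, t, ?_⟩
    simp [hx, Finset.sum_ite_eq']
  -- elements of the orthogonal of U annihilate every Qs i
  have hker : ∀ v ∈ LinearMap.BilinForm.orthogonal B U, ∀ i : Fin k, ι Qf v • Qs i = 0 := by
    intro v hv i
    by_contra h
    obtain ⟨t, ht⟩ := hprnd _ h
    apply ht
    rw [← hΓ, hBsymm]
    exact hv _ (hmem i t)
  -- the orthogonal of U is totally isotropic
  obtain ⟨i₀, hi₀⟩ := hQ
  have hiso : ∀ v ∈ LinearMap.BilinForm.orthogonal B U, ∀ w ∈ LinearMap.BilinForm.orthogonal B U, B v w = 0 := by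
    intro v hv w hw
    have h1 : (ι Qf v * ι Qf w) • Qs i₀ = 0 := by
      rw [mul_smul, hker w hw i₀, smul_zero]
    have h2 : (ι Qf w * ι Qf v) • Qs i₀ = 0 := by
      rw [mul_smul, hker v hv i₀, smul_zero]
    have h3 : (ι Qf v * ι Qf w + ι Qf w * ι Qf v) • Qs i₀ = 0 := by
      rw [add_smul, h1, h2, add_zero]
    rw [ι_mul_ι_add_swap] at h3
    have h4 : (QuadraticMap.polar Qf v w) • Qs i₀ = 0 := by
      rwa [algebraMap_smul] at h3
    have hpolar : QuadraticMap.polar Qf v w = 2 * B v w := by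
      simp only [QuadraticMap.polar, hQB, map_add, LinearMap.add_apply]
      rw [hBsymm w v]; ring
    rw [hpolar] at h4
    rcases smul_eq_zero.mp h4 with h | h
    · rcases mul_eq_zero.mp h with h2 | h2
      · exact absurd h2 two_ne_zero
      · exact h2
    · exact absurd h hi₀
  -- hence it is contained in its own orthogonal
  have hle : LinearMap.BilinForm.orthogonal B U ≤ LinearMap.BilinForm.orthogonal B (LinearMap.BilinForm.orthogonal B U) := by
    intro v hv
    rw [LinearMap.BilinForm.mem_orthogonal_iff]
    intro w hw
    exact hiso w hw v hv
  have hfin1 : finrank ℂ (LinearMap.BilinForm.orthogonal B U) = finrank ℂ V - finrank ℂ U :=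
    LinearMap.BilinForm.finrank_orthogonal (B := B) hnd U
  have hfin2 : finrank ℂ (LinearMap.BilinForm.orthogonal B (LinearMap.BilinForm.orthogonal B U))
      = finrank ℂ V - finrank ℂ (LinearMap.BilinForm.orthogonal B U) :=
    LinearMap.BilinForm.finrank_orthogonal (B := B) hnd _
  have hmono : finrank ℂ (LinearMap.BilinForm.orthogonal B U) ≤ finrank ℂ (LinearMap.BilinForm.orthogonal B (LinearMap.BilinForm.orthogonal B U)) :=
    Submodule.finrank_mono hle
  have hUle : finrank ℂ U ≤ finrank ℂ V := Submodule.finrank_le U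
  omega
end

section
/- Let 𝔄 be a supersymmetry algebra in dimension n ≥ 3, i.e. a super Lie algebra (so(n,ℂ) ⊕ 𝔤_R) ⋉ ΠΣ ⊕ V with Σ a spinorial representation and Γ : Sym²(Σ) → V a nondegenerate equivariant pairing. Suppose Q ∈ Σ is a nonzero square-zero supercharge such that the line ℂQ is invariant under the twisted so(n)-action (id, φ) : so(n) → so(n) ⊕ 𝔤_R for some Lie algebra homomorphism φ : so(n) → 𝔤_R acting trivially on V. Then [Q,−] : Σ → V is surjective. -/
open Module

attribute [local instance 100] LieRing.ofAssociativeRing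

/-- In dimension `n ≥ 3`, if a nonzero square-zero supercharge `Q ∈ Σ` spans a
line invariant under the `φ`-twisted `so(n)`-action `(id, φ) : so(n) → so(n) ⊕ 𝔤_R`,
then `[Q,−] : Σ → V` is surjective (`Q` is a topological supercharge).
Here `g` plays the role of `so(n,ℂ)` acting irreducibly on `V = ℂⁿ`,
`gR` is the R-symmetry Lie algebra acting trivially on `V`, and `Γ` is the
nondegenerate equivariant pairing `Sym²(Σ) → V`. -/
theorem stmt9
    {g gR : Type*} [LieRing g] [LieAlgebra ℂ g] [LieRing gR] [LieAlgebra ℂ gR]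
    {Sg V : Type*}
    [AddCommGroup Sg] [Module ℂ Sg] [FiniteDimensional ℂ Sg]
    [AddCommGroup V] [Module ℂ V] [FiniteDimensional ℂ V]
    (ρS : g →ₗ⁅ℂ⁆ Module.End ℂ Sg)
    (ρV : g →ₗ⁅ℂ⁆ Module.End ℂ V)
    (ρR : gR →ₗ⁅ℂ⁆ Module.End ℂ Sg)
    (hcomm : ∀ (X : g) (Y : gR), ρS X * ρR Y = ρR Y * ρS X)
    (Γ : Sg →ₗ[ℂ] Sg →ₗ[ℂ] V)
    (hΓsym : ∀ a b : Sg, Γ a b = Γ b a)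
    (hΓequiv : ∀ (X : g) (a b : Sg),
      Γ (ρS X a) b + Γ a (ρS X b) = ρV X (Γ a b))
    (hΓRinv : ∀ (Y : gR) (a b : Sg),
      Γ (ρR Y a) b + Γ a (ρR Y b) = 0)
    (hΓnd : ∀ a : Sg, a ≠ 0 → ∃ b : Sg, Γ a b ≠ 0)
    (hdim : 3 ≤ finrank ℂ V)
    (hirr : ∀ U : Submodule ℂ V, (∀ (X : g), ∀ v ∈ U, ρV X v ∈ U) →
      U = ⊥ ∨ U = ⊤)
    (φ : g →ₗ⁅ℂ⁆ gR)
    (Q : Sg) (hQ0 : Q ≠ 0) (hQsq : Γ Q Q = 0)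
    (hinv : ∀ X : g, ρS X Q + ρR (φ X) Q ∈ Submodule.span ℂ {Q}) :
    Function.Surjective fun b : Sg => Γ Q b := by
  have hU : ∀ X : g, ∀ v ∈ LinearMap.range (Γ Q), ρV X v ∈ LinearMap.range (Γ Q) := by
    rintro X _ ⟨b, rfl⟩
    obtain ⟨c, hc⟩ := Submodule.mem_span_singleton.mp (hinv X)
    refine ⟨c • b + ρR (φ X) b + ρS X b, ?_⟩
    have h1 := hΓequiv X Q b
    have h2 := hΓRinv (φ X) Q b
    have h3 : ρS X Q = c • Q - ρR (φ X) Q := eq_sub_of_add_eq hc.symm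
    have e1 : Γ Q (ρR (φ X) b) = - Γ (ρR (φ X) Q) b :=
      eq_neg_of_add_eq_zero_left (by rw [add_comm]; exact h2)
    have e2 : Γ Q (ρS X b) = ρV X (Γ Q b) - Γ (ρS X Q) b := by rw [← h1]; abel
    simp only [map_add, map_smul, e2, e1, h3, map_sub, LinearMap.sub_apply,
      LinearMap.smul_apply]
    abel
  rcases hirr (LinearMap.range (Γ Q)) hU with h | h
  · obtain ⟨b, hb⟩ := hΓnd Q hQ0
    have : (Γ Q) b ∈ LinearMap.range (Γ Q) := LinearMap.mem_range_self (Γ Q) b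
    rw [h, Submodule.mem_bot] at this
    exact absurd this hb
  · exact LinearMap.range_eq_top.mp h
end

section
/- Identify the complexified positive Weyl spinor representation of Spin(1,9) with (𝕆 ⊗_ℝ ℂ)², and the vector-valued pairing Γ₁₀ by Γ₁₀((Q,Q'),(Q,Q')) = (2 Q·Q', 2tr(Q·Q̄) − 2tr(Q'·Q̄'), 2tr(Q·Q̄) + 2tr(Q'·Q̄')) ∈ 𝕆_ℂ ⊕ ℂ ⊕ ℂ. Then a spinor (Q,Q') satisfies Γ₁₀((Q,Q'),(Q,Q')) = 0 if and only if Q·Q' = 0, N(Q) = 0 and N(Q') = 0. -/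
open Module

/-- Spin(1,9): identifying the positive Weyl spinor representation with pairs
`(Q, Q')` of complexified octonions and the vector-valued pairing by
`Γ₁₀((Q,Q'),(Q,Q')) = (2·Q·Q', 2tr(Q·Q̄) − 2tr(Q'·Q̄'), 2tr(Q·Q̄) + 2tr(Q'·Q̄'))`,
a spinor `(Q,Q')` satisfies `Γ₁₀((Q,Q'),(Q,Q')) = 0` if and only if
`Q·Q' = 0`, `N(Q) = 0` and `N(Q') = 0`. -/
theorem stmt15
    {A : Type*} [AddCommGroup A] [Module ℂ A] [FiniteDimensional ℂ A]
    (hdim : finrank ℂ A = 8)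
    (mul : A →ₗ[ℂ] A →ₗ[ℂ] A) (e : A) (he0 : e ≠ 0)
    (he : ∀ x : A, mul e x = x ∧ mul x e = x)
    (conj : A →ₗ[ℂ] A) (hconje : conj e = e)
    (N : A → ℂ) (tr : A → ℂ)
    (hNe : ∀ x : A, mul x (conj x) = N x • e)
    (htr : ∀ x : A, x + conj x = tr x • e)
    (hNmul : ∀ x y : A, N (mul x y) = N x * N y)
    (hLcancel : ∀ x y : A, mul (conj x) (mul x y) = N x • y)
    (hRcancel : ∀ x y : A, mul (mul x y) (conj y) = N y • x)
    (Q Q' : A) :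
    ((2 : ℂ) • mul Q Q' = 0 ∧
      2 * tr (mul Q (conj Q)) - 2 * tr (mul Q' (conj Q')) = 0 ∧
      2 * tr (mul Q (conj Q)) + 2 * tr (mul Q' (conj Q')) = 0) ↔
    (mul Q Q' = 0 ∧ N Q = 0 ∧ N Q' = 0) := by
  have key : ∀ x : A, tr (mul x (conj x)) = 2 * N x := by
    intro x
    set t := tr (mul x (conj x)) with ht
    have h1 : mul x (conj x) + conj (mul x (conj x)) = t • e := htr _
    rw [hNe, map_smul, hconje] at h1
    have h2 : (2 * N x) • e = t • e := by rw [← h1, two_mul, add_smul]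
    exact (smul_left_injective ℂ he0 h2).symm
  rw [key Q, key Q']
  constructor
  · rintro ⟨h1, h2, h3⟩
    refine ⟨?_, by linear_combination (h2 + h3) / 8, by linear_combination (h3 - h2) / 8⟩
    have := congrArg (fun z => (2 : ℂ)⁻¹ • z) h1
    simpa using this
  · rintro ⟨h1, h2, h3⟩
    rw [h1, h2, h3]
    norm_num
end

section
/- Let V = ℂ⁶ with the semi-spin representations S₊ = ℂ⁴, S₋ = S₊* of so(6,ℂ) ≅ sl(4,ℂ), and equivariant isomorphisms Λ²(S₊) ≅ V ≅ Λ²(S₋). Let W₊, W₋ be complex symplectic vector spaces of dimension 2 each, and Q = Q₊ + Q₋ ∈ S₊ ⊗ W₊ ⊕ S₋ ⊗ W₋ a supercharge of rank (1,1), defining lines W*_{Q₊} ⊆ S₊ and W*_{Q₋} ⊆ S₋ ≅ S₊*. Then Q squares to zero automatically, and: (a) if the natural pairing ⟨W*_{Q₋}, W*_{Q₊}⟩ = 0 then the image of [Q,−] in V is a proper (4-dimensional) subspace; (b) if ⟨W*_{Q₋}, W*_{Q₊}⟩ ≠ 0 then [Q,−] : S₊ ⊗ W₊ ⊕ S₋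 ⊗ W₋ → V is surjective. -/
open Module

lemma aux_exists_basis {S : Type*} [AddCommGroup S] [Module ℂ S] [FiniteDimensional ℂ S]
    (hS : finrank ℂ S = 4) (qp : S) (hqp : qp ≠ 0) :
    ∃ e : Basis (Fin 4) ℂ S, e 0 = qp := by
  have hli : LinearIndepOn ℂ id ({qp} : Set S) :=
    (linearIndepOn_singleton_iff ℂ).mpr hqp
  let b := Basis.extend hli
  haveI : Fintype (hli.extend (Set.subset_univ _)) := FiniteDimensional.fintypeBasisIndex b
  have hcard : Fintype.card (hli.extend (Set.subset_univ ({qp} : Set S))) = 4 := by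
    rw [← Module.finrank_eq_card_basis b, hS]
  have hmem : qp ∈ hli.extend (Set.subset_univ _) :=
    hli.subset_extend _ (Set.mem_singleton qp)
  let σ : (hli.extend (Set.subset_univ ({qp} : Set S))) ≃ Fin 4 :=
    Fintype.equivFinOfCardEq hcard
  let i0 : Fin 4 := σ ⟨qp, hmem⟩
  refine ⟨b.reindex (σ.trans (Equiv.swap 0 i0)), ?_⟩
  rw [Basis.reindex_apply]
  have : (σ.trans (Equiv.swap 0 i0)).symm 0 = ⟨qp, hmem⟩ := by
    simp [Equiv.symm_trans_apply, Equiv.swap_apply_left, i0]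
  rw [this]
  exact Basis.extend_apply_self hli _


set_option maxHeartbeats 2000000 in
/-- Dimension 6, rank (1,1): with `S = S₊` four-dimensional, `S₋ = S₊*`,
`Λ²(S₊) ≅ V ≅ Λ²(S₋)` encoded by the alternating pairings `Γp`, `Γm` valued in
the 6-dimensional space `V`, compatible via the wedge pairing `w` on `V` and a
volume form `vol` on `S₊`. A rank `(1,1)` supercharge is given by nonzero
`q₊ ∈ S₊`, `q₋ ∈ S₊*`. Then `Q` squares to zero automatically, and:
(a) if `⟨q₋, q₊⟩ = 0`, the image of `[Q,−]` in `V` is a proper 4-dimensional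
subspace; (b) if `⟨q₋, q₊⟩ ≠ 0`, then `[Q,−]` is surjective onto `V`. -/
theorem stmt16
    {S V : Type*}
    [AddCommGroup S] [Module ℂ S] [FiniteDimensional ℂ S]
    [AddCommGroup V] [Module ℂ V] [FiniteDimensional ℂ V]
    (hS : finrank ℂ S = 4) (hV : finrank ℂ V = 6)
    (Γp : S →ₗ[ℂ] S →ₗ[ℂ] V) (hΓpalt : ∀ s : S, Γp s s = 0)
    (hΓpsurj : Submodule.span ℂ {v : V | ∃ s t : S, Γp s t = v} = ⊤)
    (Γm : Module.Dual ℂ S →ₗ[ℂ] Module.Dual ℂ S →ₗ[ℂ] V)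
    (hΓmalt : ∀ α : Module.Dual ℂ S, Γm α α = 0)
    (w : V →ₗ[ℂ] V →ₗ[ℂ] ℂ) (hwsym : ∀ u v : V, w u v = w v u)
    (hwnd : ∀ u : V, (∀ v : V, w u v = 0) → u = 0)
    (vol : AlternatingMap ℂ S ℂ (Fin 4)) (hvol : vol ≠ 0)
    (hw : ∀ a b c d : S, w (Γp a b) (Γp c d) = vol ![a, b, c, d])
    (hm : ∀ (α β : Module.Dual ℂ S) (s t : S),
      w (Γm α β) (Γp s t) = α s * β t - α t * β s)
    (qp : S) (hqp : qp ≠ 0) (qm : Module.Dual ℂ S) (hqm : qm ≠ 0)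
    (Im : Submodule ℂ V)
    (hIm : Im = Submodule.span ℂ
      ({v : V | ∃ s : S, Γp qp s = v} ∪ {v : V | ∃ α : Module.Dual ℂ S, Γm qm α = v})) :
    Γp qp qp = 0 ∧ Γm qm qm = 0 ∧
      (qm qp = 0 → Im ≠ ⊤ ∧ finrank ℂ Im = 4) ∧
      (qm qp ≠ 0 → Im = ⊤) := by
  obtain ⟨e, he0⟩ := aux_exists_basis hS qp hqp
  -- antisymmetry of Γp
  have hanti : ∀ a b : S, Γp b a = -Γp a b := by
    intro a b
    have h := hΓpalt (a + b)
    simp only [map_add, LinearMap.add_apply, hΓpalt, zero_add, add_zero] at h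
    exact eq_neg_of_add_eq_zero_left h
  -- zero patterns for vol
  have z01 : ∀ a c d : S, vol ![a,a,c,d] = 0 := fun a c d =>
    vol.map_eq_zero_of_eq _ (show ![a,a,c,d] 0 = ![a,a,c,d] 1 from rfl) (by decide)
  have z02 : ∀ a b d : S, vol ![a,b,a,d] = 0 := fun a b d =>
    vol.map_eq_zero_of_eq _ (show ![a,b,a,d] 0 = ![a,b,a,d] 2 from rfl) (by decide)
  have z03 : ∀ a b c : S, vol ![a,b,c,a] = 0 := fun a b c =>
    vol.map_eq_zero_of_eq _ (show ![a,b,c,a] 0 = ![a,b,c,a] 3 from rfl) (by decide)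
  have z12 : ∀ a b d : S, vol ![a,b,b,d] = 0 := fun a b d =>
    vol.map_eq_zero_of_eq _ (show ![a,b,b,d] 1 = ![a,b,b,d] 2 from rfl) (by decide)
  have z13 : ∀ a b c : S, vol ![a,b,c,b] = 0 := fun a b c =>
    vol.map_eq_zero_of_eq _ (show ![a,b,c,b] 1 = ![a,b,c,b] 3 from rfl) (by decide)
  have z23 : ∀ a b c : S, vol ![a,b,c,c] = 0 := fun a b c =>
    vol.map_eq_zero_of_eq _ (show ![a,b,c,c] 2 = ![a,b,c,c] 3 from rfl) (by decide)
  -- adjacent swaps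
  have sw : ∀ (i j : Fin 4) (hij : i ≠ j) (x y : Fin 4 → S),
      (x ∘ Equiv.swap i j = y) → vol y = -vol x := by
    intro i j hij x y h; rw [← h]; exact vol.map_swap x hij
  have s01 : ∀ a b c d : S, vol ![b,a,c,d] = -vol ![a,b,c,d] := fun a b c d =>
    sw 0 1 (by decide) ![a,b,c,d] ![b,a,c,d] (by
      funext i; fin_cases i <;> simp [Equiv.swap_apply_def])
  have s12 : ∀ a b c d : S, vol ![a,c,b,d] = -vol ![a,b,c,d] := fun a b c d =>
    sw 1 2 (by decide) ![a,b,c,d] ![a,c,b,d] (by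
      funext i; fin_cases i <;> simp [Equiv.swap_apply_def])
  have s23 : ∀ a b c d : S, vol ![a,b,d,c] = -vol ![a,b,c,d] := fun a b c d =>
    sw 2 3 (by decide) ![a,b,c,d] ![a,b,d,c] (by
      funext i; fin_cases i <;> simp [Equiv.swap_apply_def])
  -- D and its nonvanishing
  set D : ℂ := vol ![e 0, e 1, e 2, e 3] with hDdef
  have hcoee : (⇑e : Fin 4 → S) = ![e 0, e 1, e 2, e 3] := by
    funext i; fin_cases i <;> rfl
  have hD : D ≠ 0 := by
    intro h
    apply hvol
    have h2 : vol = vol ⇑e • e.det := vol.eq_smul_basis_det e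
    have h3 : vol ⇑e = 0 := by rw [hcoee, ← hDdef]; exact h
    rw [h2, h3, zero_smul]
  -- the twelve nonzero vol values
  have p0123 : vol ![e 0, e 1, e 2, e 3] = D := hDdef.symm
  have n0132 : vol ![e 0, e 1, e 3, e 2] = -D := by
    rw [s23 (e 0) (e 1) (e 2) (e 3), p0123]
  have n0213 : vol ![e 0, e 2, e 1, e 3] = -D := by
    rw [s12 (e 0) (e 1) (e 2) (e 3), p0123]
  have p0231 : vol ![e 0, e 2, e 3, e 1] = D := by
    rw [s23 (e 0) (e 2) (e 1) (e 3), n0213, neg_neg]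
  have p0312 : vol ![e 0, e 3, e 1, e 2] = D := by
    rw [s12 (e 0) (e 1) (e 3) (e 2), n0132, neg_neg]
  have n0321 : vol ![e 0, e 3, e 2, e 1] = -D := by
    rw [s23 (e 0) (e 3) (e 1) (e 2), p0312]
  have p1203 : vol ![e 1, e 2, e 0, e 3] = D := by
    rw [s12 (e 1) (e 0) (e 2) (e 3), s01 (e 0) (e 1) (e 2) (e 3), p0123, neg_neg]
  have n1230 : vol ![e 1, e 2, e 3, e 0] = -D := by
    rw [s23 (e 1) (e 2) (e 0) (e 3), p1203]
  have n1302 : vol ![e 1, e 3, e 0, e 2] = -D := by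
    rw [s12 (e 1) (e 0) (e 3) (e 2), s01 (e 0) (e 1) (e 3) (e 2), n0132, neg_neg]
  have p1320 : vol ![e 1, e 3, e 2, e 0] = D := by
    rw [s23 (e 1) (e 3) (e 0) (e 2), n1302, neg_neg]
  have p2301 : vol ![e 2, e 3, e 0, e 1] = D := by
    rw [s12 (e 2) (e 0) (e 3) (e 1), s01 (e 0) (e 2) (e 3) (e 1), p0231, neg_neg]
  have n2310 : vol ![e 2, e 3, e 1, e 0] = -D := by
    rw [s23 (e 2) (e 3) (e 0) (e 1), p2301]
  -- the spanning family of V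
  set v : Fin 6 → V := ![Γp (e 0) (e 1), Γp (e 0) (e 2), Γp (e 0) (e 3),
    Γp (e 2) (e 3), Γp (e 1) (e 3), Γp (e 1) (e 2)] with hvdef
  have hv0 : v 0 = Γp (e 0) (e 1) := rfl
  have hv1 : v 1 = Γp (e 0) (e 2) := rfl
  have hv2 : v 2 = Γp (e 0) (e 3) := rfl
  have hv3 : v 3 = Γp (e 2) (e 3) := rfl
  have hv4 : v 4 = Γp (e 1) (e 3) := rfl
  have hv5 : v 5 = Γp (e 1) (e 2) := rfl
  -- generic expansion of Γp s t over the basis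
  have hgmem : ∀ (p : Submodule ℂ V), (∀ i j : Fin 4, Γp (e i) (e j) ∈ p) →
      ∀ s t : S, Γp s t ∈ p := by
    intro p hp s t
    rw [← Basis.sum_repr e s, ← Basis.sum_repr e t]
    simp only [map_sum, LinearMap.sum_apply, map_smul, LinearMap.smul_apply]
    refine Submodule.sum_mem _ fun i _ => Submodule.smul_mem _ _ ?_
    exact Submodule.sum_mem _ fun j _ => Submodule.smul_mem _ _ (hp j i)
  have top_le_span_v : ⊤ ≤ Submodule.span ℂ (Set.range v) := by
    rw [← hΓpsurj]
    refine Submodule.span_le.mpr ?_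
    rintro x ⟨s, t, rfl⟩
    refine hgmem _ ?_ s t
    intro i j
    have hmem : ∀ m : Fin 6, v m ∈ Submodule.span ℂ (Set.range v) := fun m =>
      Submodule.subset_span ⟨m, rfl⟩
    fin_cases i <;> fin_cases j
    all_goals first
      | (rw [hΓpalt]; exact zero_mem _)
      | (exact hv0 ▸ hmem 0) | (exact hv1 ▸ hmem 1) | (exact hv2 ▸ hmem 2)
      | (exact hv3 ▸ hmem 3) | (exact hv4 ▸ hmem 4) | (exact hv5 ▸ hmem 5)
      | (rw [hanti]; exact neg_mem (hv0 ▸ hmem 0)) | (rw [hanti]; exact neg_mem (hv1 ▸ hmem 1))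
      | (rw [hanti]; exact neg_mem (hv2 ▸ hmem 2)) | (rw [hanti]; exact neg_mem (hv3 ▸ hmem 3))
      | (rw [hanti]; exact neg_mem (hv4 ▸ hmem 4)) | (rw [hanti]; exact neg_mem (hv5 ▸ hmem 5))
  -- w-separation by the spanning family
  have hLL : ∀ x y : V, (∀ k l : Fin 4, w x (Γp (e k) (e l)) = w y (Γp (e k) (e l))) →
      x = y := by
    intro x y h
    have hz : ∀ t : V, w (x - y) t = 0 := by
      intro t
      have ht : t ∈ Submodule.span ℂ (Set.range v) := top_le_span_v trivial
      induction ht using Submodule.span_induction with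
      | mem z hz =>
        obtain ⟨m, rfl⟩ := hz
        rw [map_sub, LinearMap.sub_apply]
        fin_cases m
        · exact sub_eq_zero_of_eq (h 0 1)
        · exact sub_eq_zero_of_eq (h 0 2)
        · exact sub_eq_zero_of_eq (h 0 3)
        · exact sub_eq_zero_of_eq (h 2 3)
        · exact sub_eq_zero_of_eq (h 1 3)
        · exact sub_eq_zero_of_eq (h 1 2)
      | zero => simp
      | add a b _ _ ha hb => rw [map_add, ha, hb, add_zero]
      | smul c a _ ha => rw [map_smul, smul_eq_mul, ha, mul_zero]
    have := hwnd (x - y) hz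
    rwa [sub_eq_zero] at this
  have hfin4 : ∀ k : Fin 4, k = 0 ∨ k = 1 ∨ k = 2 ∨ k = 3 := by decide
  -- the master identity
  have hM : ∀ α : Module.Dual ℂ S, Γm qm α = D⁻¹ • (
        (qm (e 2) * α (e 3) - qm (e 3) * α (e 2)) • Γp (e 0) (e 1)
      + (qm (e 3) * α (e 1) - qm (e 1) * α (e 3)) • Γp (e 0) (e 2)
      + (qm (e 1) * α (e 2) - qm (e 2) * α (e 1)) • Γp (e 0) (e 3)
      + (qm (e 0) * α (e 1) - qm (e 1) * α (e 0)) • Γp (e 2) (e 3)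
      + (qm (e 2) * α (e 0) - qm (e 0) * α (e 2)) • Γp (e 1) (e 3)
      + (qm (e 0) * α (e 3) - qm (e 3) * α (e 0)) • Γp (e 1) (e 2)) := by
    intro α
    apply hLL
    intro k l
    rw [hm]
    simp only [map_smul, LinearMap.smul_apply, map_add, LinearMap.add_apply, smul_eq_mul, hw]
    rcases hfin4 k with rfl | rfl | rfl | rfl <;> rcases hfin4 l with rfl | rfl | rfl | rfl <;>
      simp only [z01, z02, z03, z12, z13, z23, p0123, n0132, n0213, p0231, p0312, n0321,
        p1203, n1230, n1302, p1320, p2301, n2310] <;>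
      field_simp <;> ring
  -- linear independence of v
  have hcard6 : Fintype.card (Fin 6) = finrank ℂ V := by rw [Fintype.card_fin, hV]
  have fli : LinearIndependent ℂ v := by
    have h := (basisOfTopLeSpanOfCardEqFinrank v top_le_span_v hcard6).linearIndependent
    rwa [coe_basisOfTopLeSpanOfCardEqFinrank] at h
  -- membership helpers
  have hpA : ∀ s : S, Γp qp s ∈ Im := by
    intro s; rw [hIm]; exact Submodule.subset_span (Or.inl ⟨s, rfl⟩)
  have hpA' : ∀ s : S, Γp (e 0) s ∈ Im := by intro s; rw [he0]; exact hpA s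
  have hpB : ∀ α : Module.Dual ℂ S, Γm qm α ∈ Im := by
    intro α; rw [hIm]; exact Submodule.subset_span (Or.inr ⟨α, rfl⟩)
  have hco : ∀ i j : Fin 4, e.coord i (e j) = if j = i then 1 else 0 := by
    intro i j; simp [Basis.coord_apply, Basis.repr_self, Finsupp.single_apply]
  refine ⟨hΓpalt qp, hΓmalt qm, ?_, ?_⟩
  · -- case (a)
    intro hq0
    have hq0' : qm (e 0) = 0 := by rw [he0]; exact hq0
    have hqs : ¬(qm (e 1) = 0 ∧ qm (e 2) = 0 ∧ qm (e 3) = 0) := by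
      rintro ⟨h1, h2, h3⟩
      apply hqm
      apply Basis.ext e
      intro i
      rcases hfin4 i with rfl | rfl | rfl | rfl <;>
        simp [hq0', h1, h2, h3]
    set F : Fin 4 → V := ![Γp (e 0) (e 1), Γp (e 0) (e 2), Γp (e 0) (e 3),
      Γm qm (e.coord 0)] with hFdef
    have hImF : Im = Submodule.span ℂ (Set.range F) := by
      rw [hIm]
      apply le_antisymm
      · refine Submodule.span_le.mpr ?_
        rintro x (⟨s, rfl⟩ | ⟨α, rfl⟩)
        · rw [← he0, ← Basis.sum_repr e s, map_sum]
          refine Submodule.sum_mem _ fun j _ => ?_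
          rw [map_smul]
          refine Submodule.smul_mem _ _ ?_
          rcases hfin4 j with rfl | rfl | rfl | rfl
          · rw [hΓpalt]; exact zero_mem _
          · exact Submodule.subset_span ⟨0, rfl⟩
          · exact Submodule.subset_span ⟨1, rfl⟩
          · exact Submodule.subset_span ⟨2, rfl⟩
        · have keyα : Γm qm α =
              (D⁻¹ * (qm (e 2) * α (e 3) - qm (e 3) * α (e 2))) • Γp (e 0) (e 1)
            + (D⁻¹ * (qm (e 3) * α (e 1) - qm (e 1) * α (e 3))) • Γp (e 0) (e 2)
            + (D⁻¹ * (qm (e 1) * α (e 2) - qm (e 2) * α (e 1))) • Γp (e 0) (e 3)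
            + (α (e 0)) • Γm qm (e.coord 0) := by
            rw [hM α, hM (e.coord 0)]
            match_scalars <;> simp [hco, hq0'] <;> field_simp <;> ring_nf
          rw [keyα]
          refine add_mem (add_mem (add_mem ?_ ?_) ?_) ?_
          · exact Submodule.smul_mem _ _ (Submodule.subset_span ⟨0, rfl⟩)
          · exact Submodule.smul_mem _ _ (Submodule.subset_span ⟨1, rfl⟩)
          · exact Submodule.smul_mem _ _ (Submodule.subset_span ⟨2, rfl⟩)
          · exact Submodule.smul_mem _ _ (Submodule.subset_span ⟨3, rfl⟩)
      · refine Submodule.span_le.mpr ?_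
        rintro x ⟨i, rfl⟩
        rcases hfin4 i with rfl | rfl | rfl | rfl
        · exact Submodule.subset_span (Or.inl ⟨e 1, by rw [← he0]; rfl⟩)
        · exact Submodule.subset_span (Or.inl ⟨e 2, by rw [← he0]; rfl⟩)
        · exact Submodule.subset_span (Or.inl ⟨e 3, by rw [← he0]; rfl⟩)
        · exact Submodule.subset_span (Or.inr ⟨e.coord 0, rfl⟩)
    have hFli : LinearIndependent ℂ F := by
      refine Fintype.linearIndependent_iff.mpr ?_
      intro c hc
      set d : Fin 6 → ℂ := ![c 0, c 1, c 2, c 3 * (D⁻¹ * (-(qm (e 1)))),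
        c 3 * (D⁻¹ * qm (e 2)), c 3 * (D⁻¹ * (-(qm (e 3))))] with hddef
      have hexp : ∑ m : Fin 6, d m • v m = ∑ i : Fin 4, c i • F i := by
        rw [Fin.sum_univ_six, Fin.sum_univ_four]
        rw [show (F 3 : V) = Γm qm (e.coord 0) from rfl, hM (e.coord 0)]
        rw [show (F 0 : V) = Γp (e 0) (e 1) from rfl,
          show (F 1 : V) = Γp (e 0) (e 2) from rfl,
          show (F 2 : V) = Γp (e 0) (e 3) from rfl,
          hv0, hv1, hv2, hv3, hv4, hv5,
          show d 0 = c 0 from rfl, show d 1 = c 1 from rfl, show d 2 = c 2 from rfl,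
          show d 3 = c 3 * (D⁻¹ * (-(qm (e 1)))) from rfl,
          show d 4 = c 3 * (D⁻¹ * qm (e 2)) from rfl,
          show d 5 = c 3 * (D⁻¹ * (-(qm (e 3)))) from rfl]
        match_scalars <;> simp [hco, hq0'] <;> field_simp <;> ring_nf
      have hsum : ∑ m : Fin 6, d m • v m = 0 := by rw [hexp]; exact hc
      have hd0 : ∀ m : Fin 6, d m = 0 := Fintype.linearIndependent_iff.mp fli d hsum
      intro i
      rcases hfin4 i with rfl | rfl | rfl | rfl
      · exact hd0 0
      · exact hd0 1
      · exact hd0 2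
      · by_contra h3
        refine hqs ⟨?_, ?_, ?_⟩
        · have h := hd0 3
          rcases mul_eq_zero.mp h with h' | h'
          · exact absurd h' h3
          · rcases mul_eq_zero.mp h' with h'' | h''
            · exact absurd h'' (inv_ne_zero hD)
            · exact neg_eq_zero.mp h''
        · have h := hd0 4
          rcases mul_eq_zero.mp h with h' | h'
          · exact absurd h' h3
          · rcases mul_eq_zero.mp h' with h'' | h''
            · exact absurd h'' (inv_ne_zero hD)
            · exact h''
        · have h := hd0 5
          rcases mul_eq_zero.mp h with h' | h'
          · exact absurd h' h3
          · rcases mul_eq_zero.mp h' with h'' | h''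
            · exact absurd h'' (inv_ne_zero hD)
            · exact neg_eq_zero.mp h''
    have hf4 : finrank ℂ Im = 4 := by
      rw [hImF, finrank_span_eq_card hFli, Fintype.card_fin]
    refine ⟨?_, hf4⟩
    intro htop
    rw [htop] at hf4
    rw [finrank_top] at hf4
    rw [hV] at hf4
    exact absurd hf4 (by norm_num)
  · -- case (b)
    intro hq0
    have hq0' : qm (e 0) ≠ 0 := by rw [he0]; exact hq0
    have key23 : Γp (e 2) (e 3) = ((qm (e 0))⁻¹ * D) • Γm qm (e.coord 1)
        + (-((qm (e 0))⁻¹ * qm (e 3))) • Γp (e 0) (e 2)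
        + ((qm (e 0))⁻¹ * qm (e 2)) • Γp (e 0) (e 3) := by
      rw [hM (e.coord 1)]
      match_scalars <;> simp [hco] <;> field_simp <;> ring_nf
    have key13 : Γp (e 1) (e 3) = (-((qm (e 0))⁻¹ * D)) • Γm qm (e.coord 2)
        + (-((qm (e 0))⁻¹ * qm (e 3))) • Γp (e 0) (e 1)
        + ((qm (e 0))⁻¹ * qm (e 1)) • Γp (e 0) (e 3) := by
      rw [hM (e.coord 2)]
      match_scalars <;> simp [hco] <;> field_simp <;> ring_nf
    have key12 : Γp (e 1) (e 2) = ((qm (e 0))⁻¹ * D) • Γm qm (e.coord 3)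
        + (-((qm (e 0))⁻¹ * qm (e 2))) • Γp (e 0) (e 1)
        + ((qm (e 0))⁻¹ * qm (e 1)) • Γp (e 0) (e 2) := by
      rw [hM (e.coord 3)]
      match_scalars <;> simp [hco] <;> field_simp <;> ring_nf
    have hg23 : Γp (e 2) (e 3) ∈ Im := by
      rw [key23]
      exact add_mem (add_mem (Submodule.smul_mem _ _ (hpB _)) (Submodule.smul_mem _ _ (hpA' _)))
        (Submodule.smul_mem _ _ (hpA' _))
    have hg13 : Γp (e 1) (e 3) ∈ Im := by
      rw [key13]
      exact add_mem (add_mem (Submodule.smul_mem _ _ (hpB _)) (Submodule.smul_mem _ _ (hpA' _)))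
        (Submodule.smul_mem _ _ (hpA' _))
    have hg12 : Γp (e 1) (e 2) ∈ Im := by
      rw [key12]
      exact add_mem (add_mem (Submodule.smul_mem _ _ (hpB _)) (Submodule.smul_mem _ _ (hpA' _)))
        (Submodule.smul_mem _ _ (hpA' _))
    rw [eq_top_iff, ← hΓpsurj]
    refine Submodule.span_le.mpr ?_
    rintro x ⟨s, t, rfl⟩
    refine hgmem Im ?_ s t
    intro i j
    rcases hfin4 i with rfl | rfl | rfl | rfl <;> rcases hfin4 j with rfl | rfl | rfl | rfl
    all_goals first
      | (rw [hΓpalt]; exact zero_mem _)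
      | exact hpA' _
      | exact hg23 | exact hg13 | exact hg12
      | (rw [hanti]; exact neg_mem (hpA' _))
      | (rw [hanti]; exact neg_mem hg23)
      | (rw [hanti]; exact neg_mem hg13)
      | (rw [hanti]; exact neg_mem hg12)
end

section
/- Let V = ℂ⁶ with S₊ = ℂ⁴, S₋ = S₊*, Λ²(S₊) ≅ V, and symplectic spaces W₊, W₋ of dimension 2. A rank (2,2) supercharge Q = Q₊ + Q₋, determining rank-2 subspaces W*_{Q₊} ⊆ S₊ and W*_{Q₋} ⊆ S₋, squares to zero if and only if there is an exact sequence 0 → W*_{Q₊} → S₊ → W_{Q₋} → 0 (i.e. W*_{Q₊} equals the kernel of the surjection S₊ ≅ S₋* → W_{Q₋} dual to Q₋) compatible with the induced volume forms on W*_{Q₊}, W_{Q₋} and S₊. -/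
open Module

/-- Dimension 6, rank (2,2): with `S₊` four-dimensional, `S₋ = S₊*`,
`Λ²(S₊) ≅ V ≅ Λ²(S₋)` encoded by `Γp`, `Γm`, the wedge pairing `w` on `V`
and a volume form `vol` on `S₊`, a rank `(2,2)` supercharge determined by
independent spinors `q₁, q₂ ∈ S₊` and independent functionals `α₁, α₂ ∈ S₊*`
(images of symplectic bases of `W₊*` and `W₋*`) squares to zero iff there is an
exact sequence `0 → W*_{Q₊} → S₊ → W_{Q₋} → 0`, i.e. `span{q₁,q₂}` is the kernel
of the surjection `S₊ → W_{Q₋}` dual to `Q₋`, compatibly with the induced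
volume forms. -/
theorem stmt17
    {S V : Type*}
    [AddCommGroup S] [Module ℂ S] [FiniteDimensional ℂ S]
    [AddCommGroup V] [Module ℂ V] [FiniteDimensional ℂ V]
    (hS : finrank ℂ S = 4) (hV : finrank ℂ V = 6)
    (Γp : S →ₗ[ℂ] S →ₗ[ℂ] V) (hΓpalt : ∀ s : S, Γp s s = 0)
    (hΓpsurj : Submodule.span ℂ {v : V | ∃ s t : S, Γp s t = v} = ⊤)
    (Γm : Module.Dual ℂ S →ₗ[ℂ] Module.Dual ℂ S →ₗ[ℂ] V)
    (hΓmalt : ∀ α : Module.Dual ℂ S, Γm α α = 0)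
    (w : V →ₗ[ℂ] V →ₗ[ℂ] ℂ) (hwsym : ∀ u v : V, w u v = w v u)
    (hwnd : ∀ u : V, (∀ v : V, w u v = 0) → u = 0)
    (vol : AlternatingMap ℂ S ℂ (Fin 4)) (hvol : vol ≠ 0)
    (hw : ∀ a b c d : S, w (Γp a b) (Γp c d) = vol ![a, b, c, d])
    (hm : ∀ (α β : Module.Dual ℂ S) (s t : S),
      w (Γm α β) (Γp s t) = α s * β t - α t * β s)
    (q₁ q₂ : S) (hq : LinearIndependent ℂ ![q₁, q₂])
    (α₁ α₂ : Module.Dual ℂ S) (hα : LinearIndependent ℂ ![α₁, α₂]) :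
    Γp q₁ q₂ + Γm α₁ α₂ = 0 ↔
      (Submodule.span ℂ {q₁, q₂} = LinearMap.ker α₁ ⊓ LinearMap.ker α₂ ∧
        ∀ u v : S, vol ![q₁, q₂, u, v] = α₁ v * α₂ u - α₁ u * α₂ v) := by
  constructor
  · intro heq
    have hvolid : ∀ u v : S, vol ![q₁, q₂, u, v] = α₁ v * α₂ u - α₁ u * α₂ v := by
      intro u v
      have h0 : w (Γp q₁ q₂ + Γm α₁ α₂) (Γp u v) = 0 := by rw [heq]; simp
      rw [map_add, LinearMap.add_apply, hw, hm] at h0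
      linear_combination h0
    refine ⟨?_, hvolid⟩
    -- membership of q₁ and q₂ in the kernels
    have hker : ∀ x : S, (∀ v : S, vol ![q₁, q₂, x, v] = 0) →
        α₁ x = 0 ∧ α₂ x = 0 := by
      intro x hx
      have hrel : (α₂ x) • α₁ + (-(α₁ x)) • α₂ = 0 := by
        ext v
        have := hvolid x v
        rw [hx v] at this
        simp only [LinearMap.add_apply, LinearMap.smul_apply, smul_eq_mul,
          LinearMap.zero_apply, neg_smul, LinearMap.neg_apply]
        linear_combination -this
      obtain ⟨h1, h2⟩ := LinearIndependent.pair_iff.mp hα _ _ hrel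
      exact ⟨by simpa using h2, h1⟩
    have hq1 : α₁ q₁ = 0 ∧ α₂ q₁ = 0 := by
      refine hker q₁ fun v => ?_
      exact vol.map_eq_zero_of_eq ![q₁, q₂, q₁, v]
        (show ![q₁, q₂, q₁, v] 0 = ![q₁, q₂, q₁, v] 2 from rfl) (by decide)
    have hq2 : α₁ q₂ = 0 ∧ α₂ q₂ = 0 := by
      refine hker q₂ fun v => ?_
      exact vol.map_eq_zero_of_eq ![q₁, q₂, q₂, v]
        (show ![q₁, q₂, q₂, v] 1 = ![q₁, q₂, q₂, v] 2 from rfl) (by decide)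
    have hle : Submodule.span ℂ {q₁, q₂} ≤ LinearMap.ker α₁ ⊓ LinearMap.ker α₂ := by
      rw [Submodule.span_le]
      rintro x (rfl | rfl)
      · exact ⟨hq1.1, hq1.2⟩
      · exact ⟨hq2.1, hq2.2⟩
    -- dimension count
    have hrange : Set.range ![q₁, q₂] = {q₁, q₂} := by
      ext x; simp [Fin.exists_fin_two]; tauto
    have hfq : finrank ℂ (Submodule.span ℂ {q₁, q₂}) = 2 := by
      rw [← hrange, finrank_span_eq_card hq]; simp
    have hrangeα : Set.range ![α₁, α₂] = {α₁, α₂} := by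
      ext x; simp [Fin.exists_fin_two]; tauto
    have hfα : finrank ℂ (Submodule.span ℂ {α₁, α₂}) = 2 := by
      rw [← hrangeα, finrank_span_eq_card hα]; simp
    have hcoann : LinearMap.ker α₁ ⊓ LinearMap.ker α₂ =
        (Submodule.span ℂ {α₁, α₂}).dualCoannihilator := by
      ext x
      simp only [Submodule.mem_inf, LinearMap.mem_ker,
        Submodule.mem_dualCoannihilator]
      constructor
      · rintro ⟨h1, h2⟩ φ hφ
        refine Submodule.span_induction ?_ ?_ ?_ ?_ hφ
        · rintro y (rfl | rfl)
          · exact h1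
          · exact h2
        · simp
        · intro a b _ _ ha hb; simp [ha, hb]
        · intro c a _ ha; simp [ha]
      · intro h
        exact ⟨h α₁ (Submodule.subset_span (by simp)),
          h α₂ (Submodule.subset_span (by simp))⟩
    have hfk : finrank ℂ ((LinearMap.ker α₁ ⊓ LinearMap.ker α₂ : Submodule ℂ S)) = 2 := by
      rw [hcoann]
      have := Subspace.finrank_add_finrank_dualCoannihilator_eq
        (Submodule.span ℂ {α₁, α₂})
      omega
    exact Submodule.eq_of_le_of_finrank_le hle (by rw [hfk, hfq])
  · rintro ⟨-, hvolid⟩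
    apply hwnd
    intro v
    have hv : v ∈ Submodule.span ℂ {v : V | ∃ s t : S, Γp s t = v} := by
      rw [hΓpsurj]; trivial
    refine Submodule.span_induction ?_ ?_ ?_ ?_ hv
    · rintro x ⟨s, t, rfl⟩
      rw [map_add, LinearMap.add_apply, hw, hm, hvolid s t]
      ring
    · simp
    · intro a b _ _ ha hb; rw [map_add, ha, hb, add_zero]
    · intro c a _ ha; rw [map_smul, ha, smul_zero]
end
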